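/- arXiv:1412.5100 — 3 statements merged into one kernel-verified Lean document; each statement's English description precedes it below -/
import Mathlib

section
/- Let d ∈ ℕ be even with d ≥ 2. Set M_n = 2^(⌊d/2⌋+1) · binom(n+d−1, d−1) for n ∈ ℕ, and let c_0, …, c_{d−1} be the unique real numbers with M_n = Σ_{m=0}^{d−1} c_m (n + d/2)^m for all n ∈ ℕ. Then: (a) for Re(s) > d/2, Σ_{n=0}^∞ M_n (n+d/2)^(−2s) = Σ_{m=0}^{d−1} c_m ζ(2s − m), where ζ is the Riemann zeta function (in particular c_m = 0 for even m); (b) setting d_p = ((−1)^p / p!) Σ_{m=0}^{d−1} c_m ζ(−2p − m) for p ∈ ℕ, every nonzero d_p has sign (−1)^(d/2), and for every t > 0, |d_p| t^p → ∞ as p → ∞; consequently the asymptotic series Σ_{p=0}^∞ d_p t^p of the heat trace of the square of the Dirac operator on the even-dimensional sphere S^d diverges for every t > 0. -/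
open Filter Topology Asymptotics Polynomial

section helpers
variable {x : ℝ}

lemma fact_prod : ∀ (m n : ℕ), (n + m).factorial = n.factorial * ∏ i ∈ Finset.range m, (n + 1 + i) := by
  intro m
  induction m with
  | zero => simp
  | succ m ih =>
    intro n
    rw [Finset.prod_range_succ, ← mul_assoc, ← ih n,
      show n + (m+1) = (n+m)+1 by ring, Nat.factorial_succ]
    ring

lemma eval_prod_id : ∀ (K n : ℕ),
    ((n:ℝ) + K + 1) * ∏ j ∈ Finset.range K, (((n:ℝ) + K + 1)^2 - ((j:ℝ)+1)^2)
      = ∏ i ∈ Finset.range (2*K+1), ((n:ℝ) + 1 + i) := by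
  intro K
  induction K with
  | zero => intro n; simp
  | succ K ih =>
    intro n
    have h1 := ih (n+1)
    push_cast at h1 ⊢
    rw [Finset.prod_range_succ]
    have e1 : ((n:ℝ)+1) + (K:ℝ) + 1 = (n:ℝ) + ((K:ℝ)+1) + 1 := by ring
    rw [e1] at h1
    rw [show 2*(K+1)+1 = (2*K+2)+1 by ring, Finset.prod_range_succ',
      show 2*K+2 = (2*K+1)+1 by ring, Finset.prod_range_succ]
    push_cast
    have e2 : ∀ i : ℕ, (n:ℝ) + 1 + ((i:ℝ)+1) = ((n:ℝ)+1) + 1 + (i:ℝ) := by intro i; ring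
    simp only [e2]
    rw [← h1]
    ring
end helpers

open Complex in

lemma zeta_val (N : ℕ) (hN2 : 2 ≤ N) (hNe : Even N) :
    ∃ r : ℝ, 2 * (N-1).factorial / (2*Real.pi)^N ≤ r ∧
      riemannZeta (1 - (N:ℂ)) = (((-1:ℝ)^(N/2) * r : ℝ) : ℂ) := by
  have hpi : (0:ℝ) < Real.pi := Real.pi_pos
  set ZR : ℝ := ∑' n : ℕ, 1 / (n:ℝ)^N with hZR
  have hsum : Summable (fun n:ℕ => 1/(n:ℝ)^N) := Real.summable_one_div_nat_pow.mpr (by omega)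
  have hZR1 : 1 ≤ ZR := by
    have h1 : 1/((1:ℕ):ℝ)^N ≤ ZR := Summable.le_tsum hsum 1 (fun i _ => by positivity)
    simpa using h1
  have hzeta : riemannZeta (N:ℂ) = (ZR:ℂ) := by
    rw [zeta_nat_eq_tsum_of_gt_one (by omega), hZR, Complex.ofReal_tsum]
    apply tsum_congr
    intro n
    push_cast
    ring
  have h1 : ∀ n : ℕ, (N:ℂ) ≠ -n := by
    intro n h
    have h'' : (N:ℝ) = -(n:ℝ) := by exact_mod_cast h
    have hn : (0:ℝ) ≤ (n:ℝ) := Nat.cast_nonneg n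
    have hN : (2:ℝ) ≤ (N:ℝ) := by exact_mod_cast hN2
    linarith
  have h2 : (N:ℂ) ≠ 1 := by
    intro h
    have : N = 1 := by exact_mod_cast h
    omega
  have hfe := riemannZeta_one_sub h1 h2
  have hG : Complex.Gamma (N:ℂ) = ((N-1).factorial : ℂ) := by
    rw [show (N:ℂ) = ((N-1:ℕ):ℂ) + 1 by
      have : N - 1 + 1 = N := by omega
      rw [← this]; push_cast; ring]
    exact_mod_cast Complex.Gamma_nat_eq_factorial (N-1)
  obtain ⟨k, hk⟩ := hNe
  have hcos : Complex.cos (↑Real.pi * (N:ℂ) / 2) = (((-1:ℝ)^k : ℝ) : ℂ) := by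
    rw [show (↑Real.pi * (N:ℂ)/2) = (((k:ℝ) * Real.pi : ℝ) : ℂ) by
      rw [hk]; push_cast; ring, ← Complex.ofReal_cos]
    congr 1
    have := Real.cos_nat_mul_pi_sub 0 k
    simpa using this
  have hp : (2 * (Real.pi:ℂ)) ^ (-(N:ℂ)) = ((((2*Real.pi)^N)⁻¹ : ℝ) : ℂ) := by
    rw [show (2*(Real.pi:ℂ)) = (((2*Real.pi:ℝ)):ℂ) by push_cast; ring,
      show (-(N:ℂ)) = (((-(N:ℝ)):ℝ):ℂ) by push_cast; ring,
      ← Complex.ofReal_cpow (by positivity)]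
    congr 1
    rw [Real.rpow_neg (by positivity), Real.rpow_natCast]
  refine ⟨2 * (N-1).factorial / (2*Real.pi)^N * ZR, ?_, ?_⟩
  · have hpos : (0:ℝ) < 2 * (N-1).factorial / (2*Real.pi)^N := by positivity
    nlinarith
  · rw [hfe, hG, hcos, hp, hzeta, show N/2 = k by omega]
    push_cast
    ring



lemma prodR (K : ℕ) :
    (∀ m, Odd m → (∏ j ∈ Finset.range K, (X^2 - C (((j:ℝ)+1)^2))).coeff m = 0) ∧
    (∀ r, 0 ≤ (-1:ℝ)^(K+r) * (∏ j ∈ Finset.range K, (X^2 - C (((j:ℝ)+1)^2))).coeff (2*r)) ∧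
    (∏ j ∈ Finset.range K, (X^2 - C (((j:ℝ)+1)^2))).coeff (2*K) = 1 ∧
    (∀ m, 2*K < m → (∏ j ∈ Finset.range K, (X^2 - C (((j:ℝ)+1)^2))).coeff m = 0) := by
  induction K with
  | zero =>
    refine ⟨fun m hm => ?_, fun r => ?_, by simp, fun m hm => ?_⟩
    · simp only [Finset.range_zero, Finset.prod_empty, coeff_one]
      rcases hm with ⟨t, ht⟩
      rw [if_neg (by omega)]
    · rcases Nat.eq_zero_or_pos r with rfl | hr
      · simp
      · simp only [Finset.range_zero, Finset.prod_empty, coeff_one]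
        rw [if_neg (by omega)]
        simp
    · simp only [Finset.range_zero, Finset.prod_empty, coeff_one]
      rw [if_neg (by omega)]
  | succ K ih =>
    obtain ⟨ih1, ih2, ih3, ih4⟩ := ih
    set R : Polynomial ℝ := ∏ j ∈ Finset.range K, (X^2 - C (((j:ℝ)+1)^2)) with hR
    set a : ℝ := (((K:ℕ):ℝ)+1)^2 with ha
    have ha0 : 0 ≤ a := by positivity
    have hprod : ∏ j ∈ Finset.range (K+1), (X^2 - C (((j:ℝ)+1)^2)) = R * (X^2 - C a) := by
      rw [Finset.prod_range_succ, hR]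
    have hco : ∀ m, (R * (X^2 - C a)).coeff m
        = (if 2 ≤ m then R.coeff (m-2) else 0) - R.coeff m * a := by
      intro m
      rw [mul_sub, coeff_sub, coeff_mul_X_pow', coeff_mul_C]
    refine ⟨fun m hm => ?_, fun r => ?_, ?_, fun m hm => ?_⟩
    · rw [hprod, hco]
      obtain ⟨t, ht⟩ := hm
      rcases Nat.lt_or_ge m 2 with h2 | h2
      · rw [if_neg (by omega), ih1 m ⟨t, ht⟩]
        ring
      · rw [if_pos h2, ih1 m ⟨t, ht⟩, ih1 (m-2) ⟨t-1, by omega⟩]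
        ring
    · rw [hprod, hco]
      rcases Nat.eq_zero_or_pos r with rfl | hr
      · rw [if_neg (by omega)]
        have h1 := ih2 0
        have e1 : (-1:ℝ)^(K+1+0) = -(-1:ℝ)^(K+0) := by
          rw [show K+1+0 = (K+0)+1 by omega, pow_succ]; ring
        rw [e1]
        nlinarith [ih2 0, ha0]
      · obtain ⟨t, rfl⟩ : ∃ t, r = t + 1 := ⟨r - 1, by omega⟩
        rw [if_pos (by omega)]
        have e0 : 2*(t+1) - 2 = 2*t := by omega
        rw [e0]
        have h1 := ih2 t
        have h2 := ih2 (t+1)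
        have e1 : (-1:ℝ)^(K+1+(t+1)) = (-1:ℝ)^(K+t) := by
          rw [show K+1+(t+1) = (K+t)+2 by omega, pow_add]; norm_num
        have e2 : (-1:ℝ)^(K+(t+1)) = -(-1:ℝ)^(K+t) := by
          rw [show K+(t+1) = (K+t)+1 by omega, pow_succ]; ring
        rw [e1]
        rw [e2] at h2
        nlinarith [h1, h2, ha0]
    · rw [hprod, hco, if_pos (by omega), show 2*(K+1)-2 = 2*K by omega, ih3,
        ih4 (2*(K+1)) (by omega)]
      ring
    · rw [hprod, hco, ih4 m (by omega)]
      rcases Nat.lt_or_ge m 2 with h2 | h2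
      · rw [if_neg (by omega)]; ring
      · rw [if_pos h2, ih4 (m-2) (by omega)]; ring


/-- divergent expansion for `D²` on even spheres. With
`Mₙ = 2^{d/2+1} C(n+d-1, d-1)` written as `∑_{m<d} c_m (n+d/2)^m`: (a) the zeta function
equals `∑_{m<d} c_m ζ(2s−m)` for `Re s > d/2`, and `c_m = 0` for even `m`; (b) with
`d_p = ((-1)^p/p!) ∑_m c_m ζ(−2p−m)`, every nonzero `d_p` has sign `(−1)^{d/2}`, the
terms `|d_p| t^p` blow up for every `t > 0`, and the asymptotic series `∑_p d_p t^p` of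
the heat trace of the squared Dirac operator on `S^d` diverges for every `t > 0`. -/
theorem stmt_15 (d : ℕ) (hd2 : 2 ≤ d) (hdeven : Even d)
    (Mn : ℕ → ℕ) (hM : ∀ n : ℕ, Mn n = 2 ^ (d/2 + 1) * Nat.choose (n + d - 1) (d - 1))
    (c : ℕ → ℝ)
    (hc : ∀ n : ℕ, (Mn n : ℝ) = ∑ m ∈ Finset.range d, c m * ((n : ℝ) + (d : ℝ)/2) ^ m)
    (dP : ℕ → ℂ)
    (hdP : ∀ p : ℕ, dP p = ((-1 : ℂ) ^ p / (p.factorial : ℂ)) *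
      ∑ m ∈ Finset.range d, ((c m : ℝ) : ℂ) * riemannZeta (-(2*(p : ℂ)) - (m : ℂ))) :
    (∀ s : ℂ, (d : ℝ)/2 < s.re →
      ∑' n : ℕ, (Mn n : ℂ) * (((n : ℝ) + (d : ℝ)/2 : ℝ) : ℂ) ^ (-(2*s))
        = ∑ m ∈ Finset.range d, ((c m : ℝ) : ℂ) * riemannZeta (2*s - (m : ℂ))) ∧
    (∀ m : ℕ, m < d → Even m → c m = 0) ∧
    (∀ p : ℕ, ∃ x : ℝ, 0 ≤ x ∧ dP p = ((((-1 : ℝ) ^ (d/2)) * x : ℝ) : ℂ)) ∧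
    (∀ t : ℝ, 0 < t → Tendsto (fun p : ℕ => ‖dP p‖ * t ^ p) atTop atTop) ∧
    (∀ t : ℝ, 0 < t →
      ¬ ∃ l : ℂ, Tendsto (fun K : ℕ => ∑ p ∈ Finset.range K, dP p * ((t : ℝ) : ℂ) ^ p)
          atTop (𝓝 l)) := by
  obtain ⟨K, hK⟩ : ∃ K, d = 2*K + 2 := by
    obtain ⟨k, hk⟩ := hdeven; exact ⟨k-1, by omega⟩
  subst hK
  set a0 : ℝ := 2^(K+2) / (2*K+1).factorial with ha0def
  have ha0 : 0 < a0 := by positivity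
  set R : Polynomial ℝ := ∏ j ∈ Finset.range K, (X^2 - C (((j:ℝ)+1)^2)) with hRdef
  set P : Polynomial ℝ := C a0 * (X * R) with hPdef
  set Q : Polynomial ℝ := ∑ m ∈ Finset.range (2*K+2), C (c m) * X^m with hQdef
  have hPeval : ∀ y : ℝ, P.eval y = a0 * (y * ∏ j ∈ Finset.range K, (y^2 - ((j:ℝ)+1)^2)) := by
    intro y
    simp [hPdef, hRdef, eval_prod]
  have hQeval : ∀ y : ℝ, Q.eval y = ∑ m ∈ Finset.range (2*K+2), c m * y^m := by
    intro y
    simp [hQdef, eval_finset_sum]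
  have hMn' : ∀ n : ℕ, (Mn n : ℝ) = P.eval ((n:ℝ) + K + 1) := by
    intro n
    rw [hPeval, eval_prod_id K n, hM n]
    rw [show n + (2*K+2) - 1 = n + (2*K+1) by omega, show 2*K+2-1 = 2*K+1 by omega,
      show (2*K+2)/2 + 1 = K + 2 by omega]
    have h4 := Nat.choose_mul_factorial_mul_factorial (show 2*K+1 ≤ n + (2*K+1) by omega)
    rw [show n + (2*K+1) - (2*K+1) = n by omega] at h4
    have h6 := fact_prod (2*K+1) n
    have h7 : ((n + (2*K+1)).choose (2*K+1) : ℝ) * (2*K+1).factorial * n.factorial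
        = ((n + (2*K+1)).factorial : ℝ) := by exact_mod_cast h4
    have h8 : ((n + (2*K+1)).factorial : ℝ)
        = (n.factorial : ℝ) * ∏ i ∈ Finset.range (2*K+1), ((n:ℝ) + 1 + i) := by
      rw [h6]; push_cast; ring
    have hf1 : (0:ℝ) < ((2*K+1).factorial : ℝ) := by exact_mod_cast Nat.factorial_pos _
    have hfn : (0:ℝ) < (n.factorial : ℝ) := by exact_mod_cast Nat.factorial_pos _
    have h9 : (∏ i ∈ Finset.range (2*K+1), ((n:ℝ)+1+i))
        = ((n + (2*K+1)).choose (2*K+1) : ℝ) * ((2*K+1).factorial : ℝ) := by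
      apply mul_left_cancel₀ hfn.ne'
      linear_combination (-1:ℝ)*h8 + (-1:ℝ)*h7
    push_cast
    rw [ha0def]
    field_simp
    linear_combination (-1:ℝ) * h9
  have hc' : ∀ n : ℕ, (Mn n : ℝ) = Q.eval ((n:ℝ) + K + 1) := by
    intro n
    rw [hQeval, hc n]
    apply Finset.sum_congr rfl
    intro m _
    congr 2
    push_cast
    ring
  have hPQ : P = Q := by
    apply Polynomial.eq_of_infinite_eval_eq
    apply Set.infinite_of_injective_forall_mem (f := fun n : ℕ => (n:ℝ) + K + 1)
    · intro a b hab
      simp only at hab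
      have : (a:ℝ) = b := by linarith
      exact_mod_cast this
    · intro n
      simp only [Set.mem_setOf_eq]
      rw [← hMn' n, ← hc' n]
  have hQc : ∀ m, m < 2*K+2 → Q.coeff m = c m := by
    intro m hm
    rw [hQdef]
    simp [Polynomial.finset_sum_coeff, Polynomial.coeff_C_mul, Polynomial.coeff_X_pow,
      Finset.mem_range.mpr hm]
  have hcP : ∀ m, m < 2*K+2 → c m = a0 * (X * R).coeff m := by
    intro m hm
    rw [← hQc m hm, ← hPQ, hPdef, Polynomial.coeff_C_mul]
  obtain ⟨hRodd, hRsign, hRtop, hRhigh⟩ := prodR K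
  rw [← hRdef] at hRodd hRsign hRtop hRhigh
  have hXR : ∀ j, (X * R).coeff (j+1) = R.coeff j := fun j => Polynomial.coeff_X_mul R j
  have hXR0 : (X * R).coeff 0 = 0 := by
    rw [Polynomial.mul_coeff_zero, Polynomial.coeff_X_zero, zero_mul]
  have heven : ∀ m, m < 2*K+2 → Even m → c m = 0 := by
    intro m hm hme
    rw [hcP m hm]
    rcases Nat.eq_zero_or_pos m with h0 | h1
    · subst h0; rw [hXR0, mul_zero]
    · obtain ⟨t, ht⟩ := hme
      rw [show m = (m-1)+1 by omega, hXR, hRodd (m-1) ⟨t-1, by omega⟩, mul_zero]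
  have hodd_sign : ∀ j, 2*j+1 < 2*K+2 → 0 ≤ (-1:ℝ)^(K+j) * c (2*j+1) := by
    intro j hj
    rw [hcP _ hj, hXR, mul_left_comm]
    exact mul_nonneg ha0.le (hRsign j)
  have htop : c (2*K+1) = a0 := by
    rw [hcP _ (by omega), hXR, hRtop, mul_one]
  have hpi : (0:ℝ) < Real.pi := Real.pi_pos
  have key : ∀ p : ℕ,
      ∃ x : ℝ, 2 * a0 * ((2*p+2*K+1).factorial : ℝ)
          / ((2*Real.pi)^(2*p+2*K+2) * (p.factorial : ℝ)) ≤ x ∧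
        0 ≤ x ∧ dP p = ((((-1 : ℝ) ^ ((2*K+2)/2)) * x : ℝ) : ℂ) := by
    intro p
    have hterm : ∀ m : ℕ, ∃ v : ℝ, 0 ≤ v ∧
        (m < 2*K+2 → ((c m : ℝ):ℂ) * riemannZeta (-(2*(p:ℂ)) - (m:ℂ))
          = (((-1:ℝ)^(p+(K+1)) * v : ℝ):ℂ)) ∧
        (m = 2*K+1 → 2*a0*((2*p+2*K+1).factorial:ℝ)/(2*Real.pi)^(2*p+2*K+2) ≤ v) := by
      intro m
      by_cases hmd : m < 2*K+2
      · rcases Nat.even_or_odd m with hme | hmo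
        · refine ⟨0, le_refl 0, ?_, ?_⟩
          · intro _
            rw [heven m hmd hme]
            simp
          · intro h
            exfalso
            obtain ⟨t, ht⟩ := hme
            omega
        · obtain ⟨j, hj⟩ := hmo
          subst hj
          have hNe : Even (2*p + (2*j+1) + 1) := ⟨p+j+1, by omega⟩
          obtain ⟨r, hrb, hre⟩ := zeta_val (2*p + (2*j+1) + 1) (by omega) hNe
          have hr0 : 0 < r := lt_of_lt_of_le (by positivity) hrb
          have harg : -(2*(p:ℂ)) - ((2*j+1 : ℕ):ℂ) = 1 - ((2*p + (2*j+1) + 1 : ℕ):ℂ) := by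
            push_cast; ring
          have hsign := hodd_sign j (by omega)
          set w := (-1:ℝ)^(K+j) * c (2*j+1) with hw
          have hsq : (-1:ℝ)^(K+j) * (-1:ℝ)^(K+j) = 1 := by
            rw [← pow_add, show (K+j)+(K+j) = 2*(K+j) by ring, pow_mul]
            norm_num
          have hcm : c (2*j+1) = (-1:ℝ)^(K+j) * w := by
            rw [hw, ← mul_assoc, hsq, one_mul]
          have hN2 : (2*p + (2*j+1) + 1)/2 = p + j + 1 := by omega
          refine ⟨w * r, mul_nonneg hsign hr0.le, ?_, ?_⟩
          · intro _
            rw [harg, hre, hN2, hcm]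
            rw [← Complex.ofReal_mul]
            congr 1
            have hpow : (-1:ℝ)^(K+j) * (-1:ℝ)^(p+j+1) = (-1:ℝ)^(p+(K+1)) := by
              rw [← pow_add, show K+j+(p+j+1) = (p+(K+1)) + 2*j by ring, pow_add, pow_mul]
              norm_num
            calc (-1:ℝ)^(K+j) * w * ((-1:ℝ)^(p+j+1) * r)
                = ((-1:ℝ)^(K+j) * (-1:ℝ)^(p+j+1)) * (w * r) := by ring
              _ = (-1:ℝ)^(p+(K+1)) * (w * r) := by rw [hpow]
          · intro hmk
            have hjK : j = K := by omega
            have hwa : w = a0 := by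
              rw [hw, hjK, htop, show K+K = 2*K by ring, pow_mul]
              norm_num
            rw [hjK] at hrb
            rw [show 2*p+(2*K+1)+1 - 1 = 2*p+2*K+1 by omega,
              show 2*p+(2*K+1)+1 = 2*p+2*K+2 by omega] at hrb
            rw [hwa]
            rw [show 2*a0*((2*p+2*K+1).factorial:ℝ)/(2*Real.pi)^(2*p+2*K+2)
              = a0 * (2*((2*p+2*K+1).factorial:ℝ)/(2*Real.pi)^(2*p+2*K+2)) by ring]
            exact mul_le_mul_of_nonneg_left hrb ha0.le
      · exact ⟨0, le_refl 0, fun h => absurd h hmd, fun h => by omega⟩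
    choose v hv0 hveq hvb using hterm
    have hsum_eq : (∑ m ∈ Finset.range (2*K+2), ((c m:ℝ):ℂ) * riemannZeta (-(2*(p:ℂ)) - (m:ℂ)))
        = (((-1:ℝ)^(p+(K+1)) * ∑ m ∈ Finset.range (2*K+2), v m : ℝ) : ℂ) := by
      calc (∑ m ∈ Finset.range (2*K+2), ((c m:ℝ):ℂ) * riemannZeta (-(2*(p:ℂ)) - (m:ℂ)))
          = ∑ m ∈ Finset.range (2*K+2), (((-1:ℝ)^(p+(K+1)) * v m : ℝ):ℂ) :=
            Finset.sum_congr rfl (fun m hm => hveq m (Finset.mem_range.mp hm))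
        _ = _ := by push_cast; rw [Finset.mul_sum]
    set V := ∑ m ∈ Finset.range (2*K+2), v m with hV
    have hV0 : 0 ≤ V := Finset.sum_nonneg fun m _ => hv0 m
    have hVb : 2*a0*((2*p+2*K+1).factorial:ℝ)/(2*Real.pi)^(2*p+2*K+2) ≤ V :=
      le_trans (hvb (2*K+1) rfl)
        (Finset.single_le_sum (fun m _ => hv0 m) (Finset.mem_range.mpr (by omega)))
    have hfp : (0:ℝ) < (p.factorial : ℝ) := by exact_mod_cast Nat.factorial_pos p
    refine ⟨V / (p.factorial:ℝ), ?_, div_nonneg hV0 hfp.le, ?_⟩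
    · rw [← div_div]
      gcongr
    · rw [hdP p, hsum_eq, show (2*K+2)/2 = K+1 by omega]
      have hpow : (-1:ℂ)^p * (-1:ℂ)^(p+(K+1)) = (-1:ℂ)^(K+1) := by
        rw [← pow_add, show p+(p+(K+1)) = (K+1)+2*p by ring, pow_add, pow_mul]
        norm_num
      have hfpc : (p.factorial : ℂ) ≠ 0 := by exact_mod_cast (Nat.factorial_pos p).ne'
      push_cast
      field_simp
      linear_combination (V:ℂ) * hpow
  choose xk hxb hx0 hxeq using key
  have hD : ∀ t : ℝ, 0 < t → Tendsto (fun p : ℕ => ‖dP p‖ * t ^ p) atTop atTop := by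
    intro t ht
    have hnorm : ∀ p : ℕ, ‖dP p‖ = xk p := by
      intro p
      rw [hxeq p, Complex.norm_real, Real.norm_eq_abs, abs_mul, abs_pow, abs_neg, abs_one,
        one_pow, one_mul, abs_of_nonneg (hx0 p)]
    set C0 : ℝ := 2*a0/(2*Real.pi)^(2*K+2) with hC0def
    set q : ℝ := t/(2*Real.pi)^2 with hqdef
    have hq : 0 < q := by rw [hqdef]; positivity
    have hC0 : 0 < C0 := by rw [hC0def]; positivity
    have hfac : ∀ p:ℕ, ((p.factorial:ℝ)) * (p.factorial:ℝ) ≤ ((2*p+2*K+1).factorial : ℝ) := by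
      intro p
      have h2 := Nat.choose_mul_factorial_mul_factorial (show p ≤ 2*p by omega)
      have h3 : 1 ≤ (2*p).choose p := Nat.choose_pos (by omega)
      rw [show 2*p - p = p by omega] at h2
      have h1 : p.factorial * p.factorial ≤ (2*p).factorial := by
        calc p.factorial * p.factorial = 1 * (p.factorial * p.factorial) := by ring
          _ ≤ (2*p).choose p * (p.factorial * p.factorial) := Nat.mul_le_mul_right _ h3
          _ = (2*p).factorial := by rw [← h2]; ring
      have h5 : (2*p).factorial ≤ (2*p+2*K+1).factorial := Nat.factorial_le (by omega)
      exact_mod_cast le_trans h1 h5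
    have hlow : ∀ p : ℕ, C0 * ((p.factorial:ℝ) * q^p) ≤ ‖dP p‖ * t^p := by
      intro p
      rw [hnorm p]
      have hfp : (0:ℝ) < (p.factorial : ℝ) := by exact_mod_cast Nat.factorial_pos p
      have e1 : C0 * ((p.factorial:ℝ) * q^p)
          = 2*a0*((p.factorial:ℝ)*(p.factorial:ℝ))*t^p
            / ((2*Real.pi)^(2*p+2*K+2) * (p.factorial:ℝ)) := by
        rw [hC0def, hqdef, div_pow,
          show (2*Real.pi)^(2*p+2*K+2) = ((2*Real.pi)^2)^p * (2*Real.pi)^(2*K+2) by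
            rw [← pow_mul, ← pow_add]; ring_nf]
        field_simp
      have e2 : (2*a0*((2*p+2*K+1).factorial:ℝ))
          / ((2*Real.pi)^(2*p+2*K+2) * (p.factorial:ℝ)) * t^p
          = 2*a0*((2*p+2*K+1).factorial:ℝ)*t^p
            / ((2*Real.pi)^(2*p+2*K+2) * (p.factorial:ℝ)) := by ring
      have h1 : C0 * ((p.factorial:ℝ) * q^p)
          ≤ 2*a0*((2*p+2*K+1).factorial:ℝ)
            / ((2*Real.pi)^(2*p+2*K+2) * (p.factorial:ℝ)) * t^p := by
        rw [e1, e2]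
        gcongr
        exact hfac p
      exact le_trans h1 (mul_le_mul_of_nonneg_right (hxb p) (by positivity))
    have h0 : Tendsto (fun p:ℕ => (q⁻¹)^p / (p.factorial:ℝ)) atTop (𝓝 0) :=
      FloorSemiring.tendsto_pow_div_factorial_atTop q⁻¹
    have h0' : Tendsto (fun p:ℕ => (q⁻¹)^p / (p.factorial:ℝ)) atTop (𝓝[>] 0) :=
      tendsto_nhdsWithin_of_tendsto_nhds_of_eventually_within _ h0
        (Eventually.of_forall (fun p => by simp only [Set.mem_Ioi]; positivity))
    have h1 : Tendsto (fun p:ℕ => (p.factorial:ℝ) * q^p) atTop atTop := by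
      refine h0'.inv_tendsto_nhdsGT_zero.congr (fun p => ?_)
      have hfp : (0:ℝ) < (p.factorial : ℝ) := by exact_mod_cast Nat.factorial_pos p
      simp only [Pi.inv_apply]
      rw [inv_div, div_eq_iff (by positivity), mul_assoc, ← mul_pow, mul_inv_cancel₀ hq.ne',
        one_pow, mul_one]
    exact tendsto_atTop_mono hlow (h1.const_mul_atTop hC0)
  refine ⟨?_, heven, ?_, ?_, ?_⟩
  · -- part (a)
    intro s hs
    have hhalf : ((2*K+2:ℕ):ℝ)/2 = (K:ℝ)+1 := by push_cast; ring
    rw [hhalf] at hs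
    have hK0 : (0:ℝ) ≤ (K:ℝ) := Nat.cast_nonneg K
    have hgt : ∀ m : ℕ, m < 2*K+2 → 1 < (2*s - (m:ℂ)).re := by
      intro m hm
      have hre : (2*s - (m:ℂ)).re = 2*s.re - m := by
        simp [Complex.sub_re, Complex.mul_re]
      rw [hre]
      have hm' : (m:ℝ) ≤ 2*(K:ℝ)+1 := by exact_mod_cast (by omega : m ≤ 2*K+1)
      linarith
    have hs0 : s ≠ 0 := by
      intro h; rw [h] at hs; simp at hs; linarith
    have hne2s : -(2*s) ≠ 0 := by
      simp only [neg_ne_zero, mul_ne_zero_iff]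
      exact ⟨two_ne_zero, hs0⟩
    set g : ℕ → ℂ := fun k =>
      ((∑ m ∈ Finset.range (2*K+2), c m * (k:ℝ)^m : ℝ) : ℂ) * ((k:ℝ):ℂ) ^ (-(2*s)) with hg
    have step1 : ∀ n : ℕ, (Mn n : ℂ) * ((((n:ℝ) + ((2*K+2:ℕ):ℝ)/2 : ℝ)):ℂ) ^ (-(2*s))
        = g (n + (K+1)) := by
      intro n
      have hb : ((n + (K+1) : ℕ):ℝ) = (n:ℝ) + ((2*K+2:ℕ):ℝ)/2 := by push_cast; ring
      simp only [hg, hb, ← hc n]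
      norm_cast
    have hg0 : ∀ k, k < K+1 → g k = 0 := by
      intro k hk
      have hq : (∑ m ∈ Finset.range (2*K+2), c m * (k:ℝ)^m) = 0 := by
        rw [← hQeval, ← hPQ, hPeval]
        rcases Nat.eq_zero_or_pos k with rfl | hk1
        · simp
        · rw [Finset.prod_eq_zero (Finset.mem_range.mpr (show k-1 < K by omega))
            (show ((k:ℝ))^2 - ((((k-1:ℕ)):ℝ)+1)^2 = 0 by
              rw [show ((k-1:ℕ):ℝ) = (k:ℝ) - 1 by
                push_cast [Nat.cast_sub (show 1 ≤ k by omega)]; ring]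
              ring)]
          ring
      simp only [hg, hq]
      simp
    have step2 : ∑' (n:ℕ), g (n + (K+1)) = ∑' k, g k := by
      apply Function.Injective.tsum_eq (add_left_injective (K+1))
      intro k hk
      rcases Nat.lt_or_ge k (K+1) with h | h
      · exact absurd (hg0 k h) hk
      · refine ⟨k - (K+1), ?_⟩
        show k - (K+1) + (K+1) = k
        omega
    have step3 : ∀ k : ℕ, g k
        = ∑ m ∈ Finset.range (2*K+2), ((c m:ℝ):ℂ) * (1/(k:ℂ)^(2*s - (m:ℂ))) := by
      intro k
      rcases Nat.eq_zero_or_pos k with rfl | hk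
      · simp only [hg]
        rw [show (((0:ℕ):ℝ):ℂ) = 0 by norm_num, Complex.zero_cpow hne2s, mul_zero]
        symm
        apply Finset.sum_eq_zero
        intro m hm
        rw [Nat.cast_zero, Complex.zero_cpow (show 2*s - (m:ℂ) ≠ 0 by
          intro h
          have h2 := hgt m (Finset.mem_range.mp hm)
          rw [h] at h2; norm_num at h2)]
        simp
      · have hk0 : (k:ℂ) ≠ 0 := Nat.cast_ne_zero.mpr (by omega)
        simp only [hg]
        push_cast
        rw [Finset.sum_mul]
        apply Finset.sum_congr rfl
        intro m hm
        rw [mul_assoc]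
        congr 1
        rw [← Complex.cpow_natCast, ← Complex.cpow_add _ _ hk0, one_div, ← Complex.cpow_neg]
        congr 1
        ring
    have hsummable : ∀ m ∈ Finset.range (2*K+2),
        Summable (fun k:ℕ => ((c m:ℝ):ℂ) * (1/(k:ℂ)^(2*s - (m:ℂ)))) := by
      intro m hm
      exact (Complex.summable_one_div_nat_cpow.mpr (hgt m (Finset.mem_range.mp hm))).mul_left _
    have e1 : ∑' (n:ℕ), (Mn n : ℂ) * ((((n:ℝ) + ((2*K+2:ℕ):ℝ)/2 : ℝ)):ℂ) ^ (-(2*s))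
        = ∑' (n:ℕ), g (n + (K+1)) := tsum_congr step1
    rw [e1, step2, tsum_congr step3, Summable.tsum_finsetSum hsummable]
    apply Finset.sum_congr rfl
    intro m hm
    rw [tsum_mul_left, ← zeta_eq_tsum_one_div_nat_cpow (hgt m (Finset.mem_range.mp hm))]
  · -- part (c)
    exact fun p => ⟨xk p, hx0 p, hxeq p⟩
  · -- part (d)
    exact hD
  · -- part (e)
    intro t ht h
    obtain ⟨l, hl⟩ := h
    have h2 : Tendsto (fun n : ℕ => ∑ p ∈ Finset.range (n+1), dP p * ((t:ℝ):ℂ)^p)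
        atTop (𝓝 l) := hl.comp (tendsto_add_atTop_nat 1)
    have h3 : Tendsto (fun n : ℕ => dP n * ((t:ℝ):ℂ)^n) atTop (𝓝 (l - l)) := by
      refine (h2.sub hl).congr (fun n => ?_)
      rw [Finset.sum_range_succ]
      ring
    rw [sub_self] at h3
    have h5 : Tendsto (fun n : ℕ => ‖dP n‖ * t^n) atTop (𝓝 0) := by
      have h4 := h3.norm
      rw [norm_zero] at h4
      refine h4.congr (fun n => ?_)
      rw [norm_mul, norm_pow, Complex.norm_real, Real.norm_eq_abs, abs_of_pos ht]
    have h7 := (hD t ht).eventually_ge_atTop 1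
    have h8 := h5.eventually_lt_const (show (0:ℝ) < 1 by norm_num)
    obtain ⟨n, hn1, hn2⟩ := (h7.and h8).exists
    linarith
end

section
/- Let (λ_n)_{n∈ℕ} be a strictly increasing sequence of positive reals and (M_n)_{n∈ℕ} positive integers such that M_n = O(n^b) as n → ∞ for some b ≥ 0 and λ_{n+1}/λ_n → ∞ as n → ∞. Then the series ζ(s) = Σ_{n=0}^∞ M_n λ_n^(−s) converges and defines a holomorphic function on the half-plane Re(s) > 0, but ζ admits no meromorphic continuation through the line Re(s) = 0: there is no point s₀ with Re(s₀) = 0, no open neighborhood U of s₀, and no meromorphic function on U that agrees with ζ on U ∩ {Re(s) > 0}. -/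
open Filter Topology Asymptotics Finset intervalIntegral

set_option maxHeartbeats 1600000



lemma summable_alpha (lam : ℕ → ℝ) (M : ℕ → ℕ) (hpos : ∀ n, 0 < lam n)
    (b : ℝ) (hMb : (fun n : ℕ => (M n : ℝ)) =O[atTop] fun n : ℕ => (n : ℝ) ^ b)
    (hlac : Tendsto (fun n : ℕ => lam (n+1) / lam n) atTop atTop)
    {σ : ℝ} (hσ : 0 < σ) :
    Summable (fun n : ℕ => (M n : ℝ) * lam n ^ (-σ)) := by
  obtain ⟨C, hC⟩ := hMb.isBigOWith
  rw [Asymptotics.isBigOWith_iff, eventually_atTop] at hC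
  obtain ⟨N₁, hN₁⟩ := hC
  obtain ⟨K, hK⟩ := (hlac.eventually_ge_atTop 2).exists_forall_of_atTop
  have hgrow : ∀ j : ℕ, lam K * 2 ^ j ≤ lam (K + j) := by
    intro j
    induction j with
    | zero => simp
    | succ j ih =>
      have h2 : 2 ≤ lam (K + j + 1) / lam (K + j) := hK (K + j) (Nat.le_add_right _ _)
      have := (le_div_iff₀ (hpos (K + j))).mp h2
      calc lam K * 2 ^ (j + 1) = (lam K * 2 ^ j) * 2 := by ring
        _ ≤ lam (K + j) * 2 := by nlinarith
        _ ≤ lam (K + j + 1) := by linarith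
        _ = lam (K + (j + 1)) := by ring_nf
  set k := ⌈b⌉₊ with hk
  set q : ℝ := (2 : ℝ) ^ (-σ) with hqdef
  have hq0 : 0 < q := Real.rpow_pos_of_pos (by norm_num) _
  have hq1 : q < 1 := Real.rpow_lt_one_of_one_lt_of_neg (by norm_num) (by linarith)
  have hC0 : 0 ≤ C := by
    have h1 := hN₁ N₁ le_rfl
    have h2 : (0:ℝ) ≤ ‖((M N₁ : ℝ))‖ := norm_nonneg _
    have h3 : (0:ℝ) ≤ ‖((N₁ : ℝ)) ^ b‖ := norm_nonneg _
    rcases eq_or_lt_of_le h3 with h4 | h4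
    · nlinarith [hN₁ (N₁ + 1) (Nat.le_succ _), norm_nonneg ((M (N₁+1) : ℝ)),
        norm_nonneg (((N₁+1 : ℕ) : ℝ) ^ b),
        abs_of_nonneg (Real.rpow_nonneg (show (0:ℝ) ≤ ((N₁+1:ℕ):ℝ) by positivity) b),
        Real.rpow_pos_of_pos (show (0:ℝ) < ((N₁+1:ℕ):ℝ) by positivity) b,
        Real.norm_eq_abs (((N₁+1:ℕ):ℝ) ^ b)]
    · nlinarith
  have hsum : Summable (fun n : ℕ => (C * (lam K ^ (-σ) * 2 ^ (σ * (K:ℝ)))) * ((n : ℝ) ^ k * q ^ n)) := by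
    exact (summable_pow_mul_geometric_of_norm_lt_one (R := ℝ) k (by
      rw [Real.norm_eq_abs, abs_of_pos hq0]; exact hq1)).mul_left _
  set N₂ := max (max K N₁) 1 with hN₂
  apply (summable_nat_add_iff N₂).1
  apply Summable.of_nonneg_of_le
    (fun n => mul_nonneg (Nat.cast_nonneg _) (le_of_lt (Real.rpow_pos_of_pos (hpos _) _)))
    (fun n => ?_) ((summable_nat_add_iff N₂).2 hsum)
  set m := n + N₂ with hm
  have hmK : K ≤ m := le_trans (le_trans (le_max_left _ _) (le_max_left _ _)) (Nat.le_add_left _ _)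
  have hm1 : 1 ≤ m := le_trans (le_max_right _ _) (Nat.le_add_left _ _)
  have hmN₁ : N₁ ≤ m := le_trans (le_trans (le_max_right _ _) (le_max_left _ _)) (Nat.le_add_left _ _)
  have hMle : (M m : ℝ) ≤ C * (m : ℝ) ^ k := by
    have h1 := hN₁ m hmN₁
    rw [Real.norm_eq_abs, Real.norm_eq_abs, abs_of_nonneg (Nat.cast_nonneg (M m) : (0:ℝ) ≤ (M m : ℝ))] at h1
    have h2 : |(m : ℝ) ^ b| = (m : ℝ) ^ b := abs_of_nonneg (Real.rpow_nonneg (by positivity) _)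
    rw [h2] at h1
    have h3 : (m : ℝ) ^ b ≤ (m : ℝ) ^ (k : ℝ) :=
      Real.rpow_le_rpow_of_exponent_le (by exact_mod_cast hm1) (Nat.le_ceil b)
    have h4 : (m : ℝ) ^ (k : ℝ) = (m : ℝ) ^ k := Real.rpow_natCast _ _
    calc (M m : ℝ) ≤ C * (m : ℝ) ^ b := h1
      _ ≤ C * (m : ℝ) ^ k := by rw [← h4]; nlinarith [h3]
  have hlamlow : lam K * 2 ^ (m - K) ≤ lam m := by
    have := hgrow (m - K)
    rwa [Nat.add_sub_cancel' hmK] at this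
  have hlamKpos := hpos K
  have hbase_pos : (0:ℝ) < lam K * 2 ^ (m - K) := by positivity
  have hrle : lam m ^ (-σ) ≤ (lam K * 2 ^ (m - K)) ^ (-σ) :=
    Real.rpow_le_rpow_of_nonpos hbase_pos hlamlow (by linarith)
  have hsplit : (lam K * 2 ^ (m - K) : ℝ) ^ (-σ) = lam K ^ (-σ) * ((2:ℝ) ^ (m - K : ℕ)) ^ (-σ) :=
    Real.mul_rpow (le_of_lt (hpos K)) (by positivity)
  have hcast : ((m - K : ℕ) : ℝ) = (m:ℝ) - K := by
    rw [Nat.cast_sub hmK]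
  have e1 : ((2:ℝ) ^ (m - K : ℕ)) ^ (-σ) = (2:ℝ) ^ (((m:ℝ) - K) * (-σ)) := by
    rw [← Real.rpow_natCast (2:ℝ) (m - K), ← Real.rpow_mul (by norm_num : (0:ℝ) ≤ 2), hcast]
  have e2 : (2:ℝ) ^ (σ * (K:ℝ)) * q ^ m = (2:ℝ) ^ (σ * (K:ℝ) + (-σ) * m) := by
    rw [hqdef, ← Real.rpow_natCast ((2:ℝ) ^ (-σ)) m, ← Real.rpow_mul (by norm_num : (0:ℝ) ≤ 2),
      ← Real.rpow_add (by norm_num : (0:ℝ) < 2)]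
  have hpow2 : ((2:ℝ) ^ (m - K : ℕ)) ^ (-σ) = 2 ^ (σ * (K:ℝ)) * q ^ m := by
    rw [e1, e2]; congr 1; ring
  have hlamK : (0:ℝ) < lam K ^ (-σ) := Real.rpow_pos_of_pos (hpos K) _
  calc (M m : ℝ) * lam m ^ (-σ)
      ≤ (C * (m:ℝ) ^ k) * ((lam K * 2 ^ (m - K)) ^ (-σ)) := by
        apply mul_le_mul hMle hrle (Real.rpow_nonneg (le_of_lt (hpos m)) _)
        have : (0:ℝ) ≤ (m:ℝ) ^ k := by positivity
        nlinarith
    _ = (C * (m:ℝ) ^ k) * (lam K ^ (-σ) * (2 ^ (σ * (K:ℝ)) * q ^ m)) := by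
        rw [hsplit, hpow2]
    _ = (C * (lam K ^ (-σ) * 2 ^ (σ * (K:ℝ)))) * ((m : ℝ) ^ k * q ^ m) := by ring

lemma norm_term_eq (lam : ℕ → ℝ) (M : ℕ → ℕ) (hpos : ∀ n, 0 < lam n) (s : ℂ) (n : ℕ) :
    ‖(M n : ℂ) * (lam n : ℂ) ^ (-s)‖ = (M n : ℝ) * lam n ^ (-s.re) := by
  rw [norm_mul, Complex.norm_natCast,
    Complex.norm_cpow_eq_rpow_re_of_pos (hpos n), Complex.neg_re]

lemma summable_zeta (lam : ℕ → ℝ) (M : ℕ → ℕ) (hpos : ∀ n, 0 < lam n)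
    (b : ℝ) (hMb : (fun n : ℕ => (M n : ℝ)) =O[atTop] fun n : ℕ => (n : ℝ) ^ b)
    (hlac : Tendsto (fun n : ℕ => lam (n+1) / lam n) atTop atTop)
    {s : ℂ} (hs : 0 < s.re) :
    Summable (fun n : ℕ => (M n : ℂ) * (lam n : ℂ) ^ (-s)) := by
  apply Summable.of_norm
  have : (fun n : ℕ => ‖(M n : ℂ) * (lam n : ℂ) ^ (-s)‖)
      = fun n : ℕ => (M n : ℝ) * lam n ^ (-s.re) := funext (norm_term_eq lam M hpos s)
  rw [this]
  exact summable_alpha lam M hpos b hMb hlac hs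

lemma zeta_diffOn (lam : ℕ → ℝ) (M : ℕ → ℕ) (hpos : ∀ n, 0 < lam n)
    (b : ℝ) (hMb : (fun n : ℕ => (M n : ℝ)) =O[atTop] fun n : ℕ => (n : ℝ) ^ b)
    (hlac : Tendsto (fun n : ℕ => lam (n+1) / lam n) atTop atTop) :
    DifferentiableOn ℂ (fun s : ℂ => ∑' n : ℕ, (M n : ℂ) * ((lam n : ℂ)) ^ (-s))
      {s : ℂ | 0 < s.re} := by
  intro s₀ hs₀
  have hσ₀ : 0 < s₀.re := hs₀
  set σ₀ := s₀.re with hσ₀def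
  have hre : ∀ w : ℂ, w ∈ Metric.ball s₀ (σ₀/2) → σ₀/2 < w.re ∧ w.re < 3*σ₀/2 := by
    intro w hw
    rw [Metric.mem_ball, Complex.dist_eq] at hw
    have h1 : |(w - s₀).re| ≤ ‖w - s₀‖ := Complex.abs_re_le_norm _
    rw [Complex.sub_re] at h1
    have h2 := abs_lt.mp (lt_of_le_of_lt h1 hw)
    constructor <;> [linarith [h2.1]; linarith [h2.2]]
  have hdiff : DifferentiableOn ℂ (fun s : ℂ => ∑' n : ℕ, (M n : ℂ) * ((lam n : ℂ)) ^ (-s))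
      (Metric.ball s₀ (σ₀/2)) := by
    apply Complex.differentiableOn_tsum_of_summable_norm
      (u := fun n => (M n : ℝ) * (lam n ^ (-(σ₀/2)) + lam n ^ (-(3*σ₀/2))))
    · have h1 := summable_alpha lam M hpos b hMb hlac (σ := σ₀/2) (by linarith)
      have h2 := summable_alpha lam M hpos b hMb hlac (σ := 3*σ₀/2) (by linarith)
      simpa [mul_add] using h1.add h2
    · intro i
      have hne : ((lam i : ℂ)) ≠ 0 := by
        simp only [ne_eq, Complex.ofReal_eq_zero]
        exact ne_of_gt (hpos i)
      exact (((differentiable_neg).const_cpow (Or.inl hne)).const_mul _).differentiableOn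
    · exact Metric.isOpen_ball
    · intro i w hw
      obtain ⟨hw1, hw2⟩ := hre w hw
      rw [norm_term_eq lam M hpos w i]
      apply mul_le_mul_of_nonneg_left _ (Nat.cast_nonneg _)
      rcases le_or_gt 1 (lam i) with h | h
      · have : lam i ^ (-w.re) ≤ lam i ^ (-(σ₀/2)) :=
          Real.rpow_le_rpow_of_exponent_le h (by linarith)
        have h2 : (0:ℝ) < lam i ^ (-(3*σ₀/2)) := Real.rpow_pos_of_pos (hpos i) _
        linarith
      · have : lam i ^ (-w.re) ≤ lam i ^ (-(3*σ₀/2)) :=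
          Real.rpow_le_rpow_of_exponent_ge (hpos i) (le_of_lt h) (by linarith)
        have h2 : (0:ℝ) < lam i ^ (-(σ₀/2)) := Real.rpow_pos_of_pos (hpos i) _
        linarith
  exact (hdiff.differentiableAt (Metric.isOpen_ball.mem_nhds
    (Metric.mem_ball_self (by linarith)))).differentiableWithinAt

-- sum of 1/(d+1)^2 bounded by 2
lemma aux_sum_sq (D : ℕ) : ∑ d ∈ Finset.range D, (1:ℝ)/((d:ℝ)+1)^2 ≤ 2 := by
  have h : ∀ D : ℕ, ∑ d ∈ Finset.range D, (1:ℝ)/((d:ℝ)+1)^2 ≤ 2 - 2/((D:ℝ)+1) := by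
    intro D
    induction D with
    | zero => norm_num
    | succ D ih =>
      rw [Finset.sum_range_succ]
      have h1 : (0:ℝ) < (D:ℝ) + 1 := by positivity
      have h2 : (0:ℝ) < (D:ℝ) + 2 := by positivity
      have key : (1:ℝ)/((D:ℝ)+1)^2 ≤ 2/((D:ℝ)+1) - 2/((D:ℝ)+2) := by
        rw [div_sub_div _ _ (ne_of_gt h1) (ne_of_gt h2), div_le_div_iff₀ (by positivity) (by positivity)]
        ring_nf
        nlinarith
      push_cast
      have hcast : ((D:ℝ)+1+1) = (D:ℝ)+2 := by ring
      rw [hcast]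
      linarith
  exact le_trans (h D) (by
    have : (0:ℝ) ≤ 2/((D:ℝ)+1) := by positivity
    linarith)

-- separation from gaps
lemma sep_of_gaps (x : ℕ → ℝ) (G : ℝ) (K : ℕ)
    (h : ∀ j, K ≤ j → G ≤ x (j+1) - x j) :
    ∀ m n, K ≤ m → m < n → ((n:ℝ) - (m:ℝ)) * G ≤ x n - x m := by
  intro m n hKm hmn
  induction n, hmn using Nat.le_induction with
  | base =>
    have := h m hKm
    push_cast
    ring_nf
    linarith
  | succ n hn ih =>
    have h1 := h n (le_trans hKm (le_of_lt hn))
    have h2 : ((n:ℝ) - m) * G ≤ x n - x m := ih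
    push_cast
    push_cast at h2
    nlinarith [h1, h2]

noncomputable def KK (cc Δ : ℝ) : ℂ := ∫ b in (-cc)..cc, Complex.exp (-(Δ:ℂ) * (b:ℝ) * Complex.I)

lemma KK_zero (cc : ℝ) : KK cc 0 = (2*cc : ℝ) := by
  unfold KK
  have h0 : ∀ b : ℝ, -((0:ℝ):ℂ) * (b:ℝ) * Complex.I = 0 := by intro b; simp
  simp only [h0, Complex.exp_zero]
  rw [intervalIntegral.integral_const]
  push_cast
  simp
  ring

lemma KK_norm_le (cc : ℝ) {Δ : ℝ} (hΔ : Δ ≠ 0) : ‖KK cc Δ‖ ≤ 2/|Δ| := by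
  have hrw : ∀ b : ℝ, -(Δ:ℂ) * (b:ℝ) * Complex.I = (-(Δ:ℂ) * Complex.I) * (b:ℝ) := by
    intro b; ring
  have hne : (-(Δ:ℂ) * Complex.I) ≠ 0 := by
    apply mul_ne_zero
    · simp [Complex.ofReal_eq_zero, hΔ]
    · exact Complex.I_ne_zero
  unfold KK
  simp only [hrw]
  rw [integral_exp_mul_complex hne]
  rw [norm_div]
  have h1 : ∀ r : ℝ, ‖Complex.exp (-(Δ:ℂ) * Complex.I * (r:ℝ))‖ = 1 := by
    intro r
    rw [Complex.norm_exp]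
    have : (-(Δ:ℂ) * Complex.I * (r:ℝ)).re = 0 := by
      simp [Complex.mul_re, Complex.mul_im]
    rw [this, Real.exp_zero]
  have h2 : ‖Complex.exp (-(Δ:ℂ) * Complex.I * (cc:ℝ)) - Complex.exp (-(Δ:ℂ) * Complex.I * ((-cc : ℝ):ℝ))‖ ≤ 2 := by
    refine le_trans (norm_sub_le _ _) ?_
    rw [h1, h1]; norm_num
  have h3 : ‖-(Δ:ℂ) * Complex.I‖ = |Δ| := by
    rw [norm_mul]
    simp [Complex.norm_real]
  rw [h3]
  gcongr


lemma ed_cont (ξ : ℝ) : Continuous (fun u : ℝ => Complex.exp (-(ξ:ℂ) * (u:ℝ) * Complex.I)) := by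
  apply Complex.continuous_exp.comp
  exact (continuous_const.mul Complex.continuous_ofReal).mul continuous_const

lemma ed_conj (ξ u : ℝ) : (starRingEnd ℂ) (Complex.exp (-(ξ:ℂ) * (u:ℝ) * Complex.I))
    = Complex.exp ((ξ:ℂ) * (u:ℝ) * Complex.I) := by
  rw [← Complex.exp_conj]
  congr 1
  simp [map_mul, Complex.conj_ofReal, Complex.conj_I]

lemma ed_mul (ξ η u : ℝ) : Complex.exp (-(ξ:ℂ) * (u:ℝ) * Complex.I) * Complex.exp ((η:ℂ) * (u:ℝ) * Complex.I)
    = Complex.exp (-(((ξ - η : ℝ)):ℂ) * (u:ℝ) * Complex.I) := by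
  rw [← Complex.exp_add]
  congr 1
  push_cast
  ring

lemma ed_split (ξ a bb : ℝ) : Complex.exp (-(ξ:ℂ) * ((a + bb : ℝ):ℝ) * Complex.I)
    = Complex.exp (-(ξ:ℂ) * (a:ℝ) * Complex.I) * Complex.exp (-(ξ:ℂ) * (bb:ℝ) * Complex.I) := by
  rw [← Complex.exp_add]
  congr 1
  push_cast
  ring

lemma expansion (x : ℕ → ℝ) (c : ℕ → ℂ) (N : ℕ) (cc : ℝ) :
    (∫ a in (-cc)..cc, ∫ b in (-cc)..cc,
      ‖∑ n ∈ Finset.range N, c n * Complex.exp (-(x n : ℂ) * ((a + b : ℝ)) * Complex.I)‖^2)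
    = ∑ m ∈ Finset.range N, ∑ n ∈ Finset.range N,
        ((c m * (starRingEnd ℂ) (c n)) * (KK cc (x m - x n))^2).re := by
  set S : ℝ → ℂ := fun u => ∑ n ∈ Finset.range N, c n * Complex.exp (-(x n:ℂ) * (u:ℝ) * Complex.I) with hS
  have stepA : ∀ u : ℝ, ((‖S u‖^2 : ℝ) : ℂ) = ∑ m ∈ Finset.range N, ∑ n ∈ Finset.range N,
      (c m * (starRingEnd ℂ) (c n)) * Complex.exp (-(((x m - x n : ℝ)):ℂ) * (u:ℝ) * Complex.I) := by
    intro u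
    have h1 : ((‖S u‖^2 : ℝ) : ℂ) = S u * (starRingEnd ℂ) (S u) := by
      rw [Complex.mul_conj, Complex.normSq_eq_norm_sq]
    rw [h1, hS]
    simp only
    rw [map_sum, Finset.sum_mul_sum]
    apply Finset.sum_congr rfl
    intro m _
    apply Finset.sum_congr rfl
    intro n _
    rw [map_mul, ed_conj (x n) u,
      show (c m * Complex.exp (-(x m:ℂ) * (u:ℝ) * Complex.I)) * ((starRingEnd ℂ) (c n) * Complex.exp ((x n:ℂ) * (u:ℝ) * Complex.I))
        = (c m * (starRingEnd ℂ) (c n)) * (Complex.exp (-(x m:ℂ) * (u:ℝ) * Complex.I) * Complex.exp ((x n:ℂ) * (u:ℝ) * Complex.I)) from by ring,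
      ed_mul (x m) (x n) u]
  have stepB : ∀ a : ℝ, ((∫ b in (-cc)..cc, ‖S (a + b)‖^2 : ℝ) : ℂ)
      = ∑ m ∈ Finset.range N, ∑ n ∈ Finset.range N,
        ((c m * (starRingEnd ℂ) (c n)) * Complex.exp (-(((x m - x n):ℝ):ℂ) * (a:ℝ) * Complex.I)) * KK cc (x m - x n) := by
    intro a
    rw [← intervalIntegral.integral_ofReal]
    have hinteg : ∀ b : ℝ, ((‖S (a+b)‖^2 : ℝ):ℂ) = ∑ m ∈ Finset.range N, ∑ n ∈ Finset.range N,
        ((c m * (starRingEnd ℂ) (c n)) * Complex.exp (-(((x m - x n):ℝ):ℂ) * (a:ℝ) * Complex.I))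
          * Complex.exp (-(((x m - x n):ℝ):ℂ) * (b:ℝ) * Complex.I) := by
      intro b
      rw [stepA (a+b)]
      apply Finset.sum_congr rfl
      intro m _
      apply Finset.sum_congr rfl
      intro n _
      rw [ed_split (x m - x n) a b]
      ring
    rw [intervalIntegral.integral_congr (fun b _ => hinteg b)]
    rw [intervalIntegral.integral_finset_sum]
    swap
    · intro m _
      exact ((continuous_finset_sum _ (fun n _ => continuous_const.mul (ed_cont (x m - x n)))).intervalIntegrable _ _)
    apply Finset.sum_congr rfl
    intro m _
    rw [intervalIntegral.integral_finset_sum]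
    swap
    · intro n _
      exact ((continuous_const.mul (ed_cont (x m - x n))).intervalIntegrable _ _)
    apply Finset.sum_congr rfl
    intro n _
    rw [intervalIntegral.integral_const_mul]
    rfl
  have stepC : ((∫ a in (-cc)..cc, (∫ b in (-cc)..cc, ‖S (a+b)‖^2) : ℝ) : ℂ)
      = ∑ m ∈ Finset.range N, ∑ n ∈ Finset.range N,
        (c m * (starRingEnd ℂ) (c n)) * (KK cc (x m - x n))^2 := by
    rw [← intervalIntegral.integral_ofReal]
    rw [intervalIntegral.integral_congr (fun a _ => stepB a)]
    rw [intervalIntegral.integral_finset_sum]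
    swap
    · intro m _
      exact ((continuous_finset_sum _ (fun n _ => (continuous_const.mul (ed_cont (x m - x n))).mul continuous_const)).intervalIntegrable _ _)
    apply Finset.sum_congr rfl
    intro m _
    rw [intervalIntegral.integral_finset_sum]
    swap
    · intro n _
      exact (((continuous_const.mul (ed_cont (x m - x n))).mul continuous_const).intervalIntegrable _ _)
    apply Finset.sum_congr rfl
    intro n _
    have hrw : ∀ b : ℝ, ((c m * (starRingEnd ℂ) (c n)) * Complex.exp (-(((x m - x n):ℝ):ℂ) * (b:ℝ) * Complex.I)) * KK cc (x m - x n)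
        = ((c m * (starRingEnd ℂ) (c n)) * KK cc (x m - x n)) * Complex.exp (-(((x m - x n):ℝ):ℂ) * (b:ℝ) * Complex.I) := by
      intro b; ring
    rw [intervalIntegral.integral_congr (fun b _ => hrw b)]
    rw [intervalIntegral.integral_const_mul]
    show _ * KK cc (x m - x n) = _
    ring
  have final := congrArg Complex.re stepC
  rw [Complex.ofReal_re] at final
  rw [final, Complex.re_sum]
  apply Finset.sum_congr rfl
  intro m _
  rw [Complex.re_sum]

lemma double_bound (cc Bb : ℝ) (hcc : 0 < cc) (S : ℝ → ℂ)
    (hSb : ∀ u : ℝ, |u| ≤ 2*cc → ‖S u‖ ≤ Bb) :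
    (∫ a in (-cc)..cc, ∫ b in (-cc)..cc, ‖S (a+b)‖^2) ≤ Bb^2 * (2*cc)^2 := by
  have hB0 : 0 ≤ Bb := le_trans (norm_nonneg (S 0)) (hSb 0 (by rw [abs_zero]; positivity))
  have habs : |cc - (-cc)| = 2*cc := by rw [abs_of_nonneg (by linarith)]; ring
  have inner : ∀ a : ℝ, |a| ≤ cc → ‖∫ b in (-cc)..cc, ‖S (a+b)‖^2‖ ≤ Bb^2 * (2*cc) := by
    intro a ha
    have h := intervalIntegral.norm_integral_le_of_norm_le_const (C := Bb^2)
      (f := fun b => ‖S (a+b)‖^2) (a := -cc) (b := cc) ?_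
    · rw [habs] at h; exact h
    · intro bb hbb
      rw [Set.uIoc_of_le (by linarith : -cc ≤ cc)] at hbb
      have hb2 : |bb| ≤ cc := abs_le.mpr ⟨le_of_lt hbb.1, hbb.2⟩
      have habs2 : |a + bb| ≤ 2*cc := by
        have := abs_add_le a bb
        linarith [abs_le.mp ha, abs_le.mp hb2]
      have hs := hSb (a+bb) habs2
      show ‖‖S (a + bb)‖ ^ 2‖ ≤ Bb ^ 2
      rw [Real.norm_eq_abs, abs_of_nonneg (by positivity)]
      nlinarith [norm_nonneg (S (a+bb))]
  have outer : ‖∫ a in (-cc)..cc, (∫ b in (-cc)..cc, ‖S (a+b)‖^2)‖ ≤ (Bb^2 * (2*cc)) * (2*cc) := by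
    have h := intervalIntegral.norm_integral_le_of_norm_le_const (C := Bb^2 * (2*cc))
      (f := fun a => ∫ b in (-cc)..cc, ‖S (a+b)‖^2) (a := -cc) (b := cc) ?_
    · rw [habs] at h; exact h
    · intro a ha
      rw [Set.uIoc_of_le (by linarith : -cc ≤ cc)] at ha
      exact inner a (abs_le.mpr ⟨le_of_lt ha.1, ha.2⟩)
  calc (∫ a in (-cc)..cc, (∫ b in (-cc)..cc, ‖S (a+b)‖^2))
      ≤ ‖∫ a in (-cc)..cc, (∫ b in (-cc)..cc, ‖S (a+b)‖^2)‖ := le_abs_self _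
    _ ≤ (Bb^2 * (2*cc)) * (2*cc) := outer
    _ = Bb^2 * (2*cc)^2 := by ring

-- helper: C / B^2 ≤ C / A^2 for 0 < A ≤ B, 0 ≤ C
lemma div_sq_mono {A B : ℝ} (hA : 0 < A) (h : A ≤ B) : (4:ℝ) / B^2 ≤ 4 / A^2 := by
  have h1 : A^2 ≤ B^2 := by nlinarith
  have h2 : (0:ℝ) < A^2 := by positivity
  apply div_le_div_of_nonneg_left (by norm_num) h2 h1

lemma sum_lower (m : ℕ) (G : ℝ) (hG : 0 < G) :
    ∑ n ∈ Finset.range m, 4/((((m:ℝ) - n))^2 * G^2) ≤ 8/G^2 := by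
  have key : ∑ n ∈ Finset.range m, 4/((((m:ℝ) - n))^2 * G^2)
      = ∑ j ∈ Finset.range m, 4/(((j:ℝ)+1)^2 * G^2) := by
    rw [← Finset.sum_range_reflect]
    apply Finset.sum_congr rfl
    intro j hj
    have hj' : j < m := Finset.mem_range.mp hj
    have hc : ((m - 1 - j : ℕ):ℝ) = (m:ℝ) - 1 - j := by
      rw [Nat.cast_sub (by omega), Nat.cast_sub (by omega)]
      push_cast
      ring
    rw [hc]
    congr 1
    ring
  rw [key]
  have h2 : ∑ j ∈ Finset.range m, 4/(((j:ℝ)+1)^2 * G^2)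
      = (4/G^2) * ∑ j ∈ Finset.range m, 1/(((j:ℝ)+1)^2) := by
    rw [Finset.mul_sum]
    apply Finset.sum_congr rfl
    intro j _
    field_simp
  rw [h2]
  have h3 := aux_sum_sq m
  have h4 : (0:ℝ) < 4/G^2 := by positivity
  calc (4/G^2) * ∑ j ∈ Finset.range m, 1/(((j:ℝ)+1)^2) ≤ (4/G^2) * 2 := by nlinarith
    _ = 8/G^2 := by ring

lemma sum_upper (m N : ℕ) (G : ℝ) (hG : 0 < G) :
    ∑ n ∈ Finset.Ico (m+1) N, 4/((((n:ℝ) - m))^2 * G^2) ≤ 8/G^2 := by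
  rw [Finset.sum_Ico_eq_sum_range]
  have key : ∑ k ∈ Finset.range (N - (m+1)), 4/(((((m+1+k : ℕ)):ℝ) - m)^2 * G^2)
      = ∑ k ∈ Finset.range (N - (m+1)), 4/(((k:ℝ)+1)^2 * G^2) := by
    apply Finset.sum_congr rfl
    intro k _
    congr 1
    push_cast
    ring
  rw [key]
  have h2 : ∑ j ∈ Finset.range (N-(m+1)), 4/(((j:ℝ)+1)^2 * G^2)
      = (4/G^2) * ∑ j ∈ Finset.range (N-(m+1)), 1/(((j:ℝ)+1)^2) := by
    rw [Finset.mul_sum]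
    apply Finset.sum_congr rfl
    intro j _
    field_simp
  rw [h2]
  have h3 := aux_sum_sq (N-(m+1))
  have h4 : (0:ℝ) < 4/G^2 := by positivity
  calc (4/G^2) * ∑ j ∈ Finset.range (N-(m+1)), 1/(((j:ℝ)+1)^2) ≤ (4/G^2) * 2 := by nlinarith
    _ = 8/G^2 := by ring

lemma row_glob (x : ℕ → ℝ) (g₀ : ℝ) (hg₀ : 0 < g₀)
    (hsep : ∀ m n : ℕ, m < n → ((n:ℝ) - m) * g₀ ≤ x n - x m)
    (N m : ℕ) :
    ∑ n ∈ (Finset.range N).erase m, 4/(x m - x n)^2 ≤ 16/g₀^2 := by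
  have hnn : ∀ n ∈ Finset.range m ∪ Finset.Ico (m+1) N, n ∉ (Finset.range N).erase m
      → (0:ℝ) ≤ 4/(x m - x n)^2 := by intro n _ _; positivity
  have hsub : (Finset.range N).erase m ⊆ Finset.range m ∪ Finset.Ico (m+1) N := by
    intro n hn
    simp only [Finset.mem_erase, Finset.mem_range] at hn
    simp only [Finset.mem_union, Finset.mem_range, Finset.mem_Ico]
    omega
  have hdisj : Disjoint (Finset.range m) (Finset.Ico (m+1) N) := by
    simp only [Finset.disjoint_left, Finset.mem_range, Finset.mem_Ico]
    omega
  calc ∑ n ∈ (Finset.range N).erase m, 4/(x m - x n)^2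
      ≤ ∑ n ∈ Finset.range m ∪ Finset.Ico (m+1) N, 4/(x m - x n)^2 :=
        Finset.sum_le_sum_of_subset_of_nonneg hsub (fun i hi hni => by positivity)
    _ = (∑ n ∈ Finset.range m, 4/(x m - x n)^2) + ∑ n ∈ Finset.Ico (m+1) N, 4/(x m - x n)^2 :=
        Finset.sum_union hdisj
    _ ≤ 8/g₀^2 + 8/g₀^2 := by
        apply add_le_add
        · calc ∑ n ∈ Finset.range m, 4/(x m - x n)^2
              ≤ ∑ n ∈ Finset.range m, 4/((((m:ℝ) - n))^2 * g₀^2) := by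
                apply Finset.sum_le_sum
                intro n hn
                have hnm : n < m := Finset.mem_range.mp hn
                have hd : ((m:ℝ) - n) * g₀ ≤ x m - x n := hsep n m hnm
                have hpos' : (0:ℝ) < ((m:ℝ) - n) * g₀ := by
                  apply mul_pos _ hg₀
                  have : (n:ℝ) < m := by exact_mod_cast hnm
                  linarith
                have := div_sq_mono hpos' hd
                calc 4/(x m - x n)^2 ≤ 4/(((m:ℝ) - n) * g₀)^2 := this
                  _ = 4/((((m:ℝ) - n))^2 * g₀^2) := by rw [mul_pow]
            _ ≤ 8/g₀^2 := sum_lower m g₀ hg₀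
        · calc ∑ n ∈ Finset.Ico (m+1) N, 4/(x m - x n)^2
              ≤ ∑ n ∈ Finset.Ico (m+1) N, 4/((((n:ℝ) - m))^2 * g₀^2) := by
                apply Finset.sum_le_sum
                intro n hn
                have hnm : m < n := (Finset.mem_Ico.mp hn).1
                have hd : ((n:ℝ) - m) * g₀ ≤ x n - x m := hsep m n hnm
                have hpos' : (0:ℝ) < ((n:ℝ) - m) * g₀ := by
                  apply mul_pos _ hg₀
                  have : (m:ℝ) < n := by exact_mod_cast hnm
                  linarith
                have h5 := div_sq_mono hpos' hd
                have h6 : (x m - x n)^2 = (x n - x m)^2 := by ring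
                calc 4/(x m - x n)^2 = 4/(x n - x m)^2 := by rw [h6]
                  _ ≤ 4/(((n:ℝ) - m) * g₀)^2 := h5
                  _ = 4/((((n:ℝ) - m))^2 * g₀^2) := by rw [mul_pow]
            _ ≤ 8/g₀^2 := sum_upper m N g₀ hg₀
    _ = 16/g₀^2 := by ring

lemma row_far (x : ℕ → ℝ) (G : ℝ) (hG : 0 < G) (K₀ N m : ℕ)
    (hxmono : Monotone x)
    (hsepG : ∀ m n : ℕ, K₀ ≤ m → m < n → ((n:ℝ) - m) * G ≤ x n - x m)
    (hmK : 2*K₀ + 1 ≤ m) :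
    ∑ n ∈ (Finset.range N).erase m, 4/(x m - x n)^2 ≤ 20/G^2 := by
  have hK₀m : K₀ < m := by omega
  have hsub : (Finset.range N).erase m ⊆
      (Finset.range K₀ ∪ Finset.Ico K₀ m) ∪ Finset.Ico (m+1) N := by
    intro n hn
    simp only [Finset.mem_erase, Finset.mem_range] at hn
    simp only [Finset.mem_union, Finset.mem_range, Finset.mem_Ico]
    omega
  have hdisj2 : Disjoint (Finset.range K₀ ∪ Finset.Ico K₀ m) (Finset.Ico (m+1) N) := by
    simp only [Finset.disjoint_left, Finset.mem_union, Finset.mem_range, Finset.mem_Ico]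
    omega
  have hdisj1 : Disjoint (Finset.range K₀) (Finset.Ico K₀ m) := by
    simp only [Finset.disjoint_left, Finset.mem_range, Finset.mem_Ico]
    omega
  have hsepKm : ((m:ℝ) - K₀) * G ≤ x m - x K₀ := hsepG K₀ m le_rfl hK₀m
  have hcKm : ((K₀:ℝ)) + 1 ≤ (m:ℝ) - K₀ := by
    have : (2*K₀ + 1 : ℝ) ≤ (m:ℝ) := by exact_mod_cast hmK
    push_cast at this ⊢
    linarith
  calc ∑ n ∈ (Finset.range N).erase m, 4/(x m - x n)^2
      ≤ ∑ n ∈ (Finset.range K₀ ∪ Finset.Ico K₀ m) ∪ Finset.Ico (m+1) N, 4/(x m - x n)^2 :=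
        Finset.sum_le_sum_of_subset_of_nonneg hsub (fun i _ _ => by positivity)
    _ = (∑ n ∈ Finset.range K₀ ∪ Finset.Ico K₀ m, 4/(x m - x n)^2)
        + ∑ n ∈ Finset.Ico (m+1) N, 4/(x m - x n)^2 := Finset.sum_union hdisj2
    _ = ((∑ n ∈ Finset.range K₀, 4/(x m - x n)^2) + ∑ n ∈ Finset.Ico K₀ m, 4/(x m - x n)^2)
        + ∑ n ∈ Finset.Ico (m+1) N, 4/(x m - x n)^2 := by rw [Finset.sum_union hdisj1]
    _ ≤ (4/G^2 + 8/G^2) + 8/G^2 := by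
        apply add_le_add
        apply add_le_add
        · -- head: n < K₀
          have hterm : ∀ n ∈ Finset.range K₀, 4/(x m - x n)^2 ≤ 4/(((K₀:ℝ)+1)^2 * G^2) := by
            intro n hn
            have hnK : n < K₀ := Finset.mem_range.mp hn
            have h1 : x n ≤ x K₀ := hxmono (le_of_lt hnK)
            have h2 : ((K₀:ℝ)+1) * G ≤ x m - x n := by
              have h3 : ((m:ℝ) - K₀) * G ≤ x m - x K₀ := hsepKm
              nlinarith
            have := div_sq_mono (by positivity : (0:ℝ) < ((K₀:ℝ)+1) * G) h2
            calc 4/(x m - x n)^2 ≤ 4/(((K₀:ℝ)+1) * G)^2 := this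
              _ = 4/(((K₀:ℝ)+1)^2 * G^2) := by rw [mul_pow]
          calc ∑ n ∈ Finset.range K₀, 4/(x m - x n)^2
              ≤ ∑ _n ∈ Finset.range K₀, 4/(((K₀:ℝ)+1)^2 * G^2) := Finset.sum_le_sum hterm
            _ = (K₀:ℝ) * (4/(((K₀:ℝ)+1)^2 * G^2)) := by
                rw [Finset.sum_const, Finset.card_range]
                simp [nsmul_eq_mul]
            _ ≤ 4/G^2 := by
                rw [mul_div_assoc']
                rw [div_le_div_iff₀ (by positivity) (by positivity)]
                have h0 : (0:ℝ) ≤ (K₀:ℝ) := Nat.cast_nonneg _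
                nlinarith [sq_nonneg ((K₀:ℝ)), sq_nonneg G]
        · -- middle: K₀ ≤ n < m
          calc ∑ n ∈ Finset.Ico K₀ m, 4/(x m - x n)^2
              ≤ ∑ n ∈ Finset.Ico K₀ m, 4/((((m:ℝ) - n))^2 * G^2) := by
                apply Finset.sum_le_sum
                intro n hn
                obtain ⟨hn1, hn2⟩ := Finset.mem_Ico.mp hn
                have hd : ((m:ℝ) - n) * G ≤ x m - x n := hsepG n m hn1 hn2
                have hpos' : (0:ℝ) < ((m:ℝ) - n) * G := by
                  apply mul_pos _ hG
                  have : (n:ℝ) < m := by exact_mod_cast hn2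
                  linarith
                have := div_sq_mono hpos' hd
                calc 4/(x m - x n)^2 ≤ 4/(((m:ℝ) - n) * G)^2 := this
                  _ = 4/((((m:ℝ) - n))^2 * G^2) := by rw [mul_pow]
            _ ≤ ∑ n ∈ Finset.range m, 4/((((m:ℝ) - n))^2 * G^2) := by
                apply Finset.sum_le_sum_of_subset_of_nonneg
                · intro n hn
                  simp only [Finset.mem_Ico] at hn
                  exact Finset.mem_range.mpr hn.2
                · intro i _ _; positivity
            _ ≤ 8/G^2 := sum_lower m G hG
        · -- upper: n > m
          calc ∑ n ∈ Finset.Ico (m+1) N, 4/(x m - x n)^2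
              ≤ ∑ n ∈ Finset.Ico (m+1) N, 4/((((n:ℝ) - m))^2 * G^2) := by
                apply Finset.sum_le_sum
                intro n hn
                have hnm : m < n := (Finset.mem_Ico.mp hn).1
                have hd : ((n:ℝ) - m) * G ≤ x n - x m := hsepG m n (by omega) hnm
                have hpos' : (0:ℝ) < ((n:ℝ) - m) * G := by
                  apply mul_pos _ hG
                  have : (m:ℝ) < n := by exact_mod_cast hnm
                  linarith
                have h5 := div_sq_mono hpos' hd
                have h6 : (x m - x n)^2 = (x n - x m)^2 := by ring
                calc 4/(x m - x n)^2 = 4/(x n - x m)^2 := by rw [h6]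
                  _ ≤ 4/(((n:ℝ) - m) * G)^2 := h5
                  _ = 4/((((n:ℝ) - m))^2 * G^2) := by rw [mul_pow]
            _ ≤ 8/G^2 := sum_upper m N G hG
    _ = 20/G^2 := by ring



lemma no_mero (lam : ℕ → ℝ) (M : ℕ → ℕ)
    (hpos : ∀ n, 0 < lam n) (hmono : StrictMono lam) (hM : ∀ n, 0 < M n)
    (b : ℝ) (hb : 0 ≤ b)
    (hMb : (fun n : ℕ => (M n : ℝ)) =O[atTop] fun n : ℕ => (n : ℝ) ^ b)
    (hlac : Tendsto (fun n : ℕ => lam (n+1) / lam n) atTop atTop) :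
    ¬ ∃ (s₀ : ℂ) (U : Set ℂ) (g : ℂ → ℂ), s₀.re = 0 ∧ IsOpen U ∧ s₀ ∈ U ∧
        MeromorphicOn g U ∧
        ∀ s ∈ U, 0 < s.re → g s = ∑' n : ℕ, (M n : ℂ) * ((lam n : ℂ)) ^ (-s) := by
  rintro ⟨s₀, U, g, hs₀re, hUopen, hs₀U, hmero, hagree⟩
  set x : ℕ → ℝ := fun n => Real.log (lam n) with hxdef
  have hxstrict : StrictMono x := fun a c hac => Real.log_lt_log (hpos a) (hmono hac)
  -- find an analytic point z₁ on the line re = 0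
  have hev : ∀ᶠ z in 𝓝[≠] s₀, AnalyticAt ℂ g z ∧ z ∈ U :=
    ((hmero s₀ hs₀U).eventually_analyticAt).and
      ((hUopen.eventually_mem hs₀U).filter_mono nhdsWithin_le_nhds)
  rw [eventually_nhdsWithin_iff] at hev
  obtain ⟨r, hr0, hr⟩ := Metric.eventually_nhds_iff.mp hev
  set z₁ : ℂ := s₀ + ((r/2 : ℝ) : ℂ) * Complex.I with hz₁def
  have hrne : ((r/2 : ℝ) : ℂ) ≠ 0 := Complex.ofReal_ne_zero.mpr (by positivity)
  have hz₁ne : z₁ ≠ s₀ := by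
    rw [hz₁def]
    intro h
    have h2 : ((r/2 : ℝ) : ℂ) * Complex.I = 0 := by
      have := add_eq_left.mp h
      exact this
    rcases mul_eq_zero.mp h2 with h3 | h3
    · exact hrne h3
    · exact Complex.I_ne_zero h3
  have hz₁dist : dist z₁ s₀ < r := by
    rw [hz₁def, Complex.dist_eq, add_sub_cancel_left, norm_mul, Complex.norm_I,
      Complex.norm_real, mul_one, Real.norm_eq_abs, abs_of_pos (by positivity : (0:ℝ) < r/2)]
    linarith
  obtain ⟨hAn, hz₁U⟩ := hr hz₁dist (by simpa using hz₁ne)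
  have hz₁re : z₁.re = 0 := by
    rw [hz₁def]
    simp [Complex.add_re, Complex.mul_re, hs₀re]
  set t₁ : ℝ := z₁.im with ht₁def
  have hz₁eq : z₁ = (t₁:ℂ) * Complex.I := by
    apply Complex.ext
    · simp [hz₁re]
    · simp [ht₁def]
  -- local boundedness of g near z₁
  obtain ⟨δ, hδ0, hδ⟩ := Metric.continuousAt_iff.mp hAn.continuousAt 1 one_pos
  obtain ⟨δ', hδ'0, hδ'⟩ := Metric.isOpen_iff.mp hUopen z₁ hz₁U
  set ε : ℝ := min δ δ' / 3 with hεdef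
  have hmin0 : 0 < min δ δ' := lt_min hδ0 hδ'0
  have hε0 : 0 < ε := by rw [hεdef]; linarith
  set B : ℝ := ‖g z₁‖ + 1 with hBdef
  have hB1 : 1 ≤ B := by
    have := norm_nonneg (g z₁)
    rw [hBdef]; linarith
  have hBbound : ∀ σ θ : ℝ, 0 < σ → σ ≤ ε → |θ| ≤ ε →
      ‖∑' n : ℕ, (M n : ℂ) * ((lam n : ℂ)) ^ (-((σ:ℂ) + (((t₁ + θ : ℝ)):ℂ) * Complex.I))‖ ≤ B := by
    intro σ θ hσ hσε hθ
    set w : ℂ := (σ:ℂ) + (((t₁ + θ : ℝ)):ℂ) * Complex.I with hwdef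
    have hwz : ‖w - z₁‖ < min δ δ' := by
      have hw1 : w - z₁ = (σ:ℂ) + (θ:ℂ) * Complex.I := by
        rw [hwdef, hz₁eq]; push_cast; ring
      rw [hw1]
      calc ‖(σ:ℂ) + (θ:ℂ) * Complex.I‖
          ≤ ‖((σ:ℂ))‖ + ‖(θ:ℂ) * Complex.I‖ := norm_add_le _ _
        _ = σ + |θ| := by
            rw [Complex.norm_real, Real.norm_eq_abs, abs_of_pos hσ, norm_mul, Complex.norm_I, Complex.norm_real, Real.norm_eq_abs, mul_one]
        _ ≤ 2*ε := by linarith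
        _ < 3*ε := by linarith
        _ = min δ δ' := by rw [hεdef]; ring
    have hwU : w ∈ U := hδ' (by
      rw [Metric.mem_ball, Complex.dist_eq]
      exact lt_of_lt_of_le hwz (min_le_right _ _))
    have hwre : 0 < w.re := by
      rw [hwdef]
      simp [Complex.add_re, Complex.mul_re]
      exact hσ
    have hgw := hagree w hwU hwre
    rw [← hgw]
    have hd := hδ (show dist w z₁ < δ from by
      rw [Complex.dist_eq]; exact lt_of_lt_of_le hwz (min_le_left _ _))
    rw [dist_eq_norm] at hd
    have h5 := norm_sub_norm_le (g w) (g z₁)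
    rw [hBdef]
    linarith
  -- gaps of x
  have hgapt : Tendsto (fun n => x (n+1) - x n) atTop atTop := by
    have heq : (fun n : ℕ => Real.log (lam (n+1) / lam n)) = fun n => x (n+1) - x n := by
      funext n; exact Real.log_div (ne_of_gt (hpos _)) (ne_of_gt (hpos _))
    rw [← heq]
    exact Real.tendsto_log_atTop.comp hlac
  have hgappos : ∀ n, 0 < x (n+1) - x n := fun n => sub_pos.mpr (hxstrict (Nat.lt_succ_self n))
  have hxmono : Monotone x := hxstrict.monotone
  obtain ⟨K₂, hK₂⟩ := (hgapt.eventually_ge_atTop 1).exists_forall_of_atTop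
  set g₀ : ℝ := min 1 ((Finset.range (K₂+1)).inf' ⟨0, by simp⟩ (fun n => x (n+1) - x n)) with hg₀def
  have hg₀pos : 0 < g₀ := by
    rw [hg₀def]
    apply lt_min one_pos
    refine (Finset.lt_inf'_iff _).mpr ?_
    intro n _
    exact hgappos n
  have hg₀le : ∀ n, g₀ ≤ x (n+1) - x n := by
    intro n
    rcases le_or_gt n K₂ with h | h
    · exact le_trans (min_le_right _ _) (Finset.inf'_le _ (Finset.mem_range.mpr (by omega)))
    · exact le_trans (min_le_left _ _) (hK₂ n (le_of_lt h))
  have hsep0 : ∀ m n : ℕ, m < n → ((n:ℝ) - m) * g₀ ≤ x n - x m :=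
    fun m n hmn => sep_of_gaps x g₀ 0 (fun j _ => hg₀le j) m n (Nat.zero_le m) hmn
  set G : ℝ := 8/ε with hGdef
  have hG0 : 0 < G := by rw [hGdef]; positivity
  obtain ⟨K₀, hK₀⟩ := (hgapt.eventually_ge_atTop G).exists_forall_of_atTop
  have hsepG : ∀ m n : ℕ, K₀ ≤ m → m < n → ((n:ℝ) - m) * G ≤ x n - x m :=
    fun m n hKm hmn => sep_of_gaps x G K₀ (fun j hj => hK₀ j hj) m n hKm hmn
  set K₁ : ℕ := 2*K₀ + 1 with hK₁def
  set Cc : ℝ := ∑ m ∈ Finset.range K₁, ((M m : ℝ) * (1 + lam m ^ (-ε)))^2 * (16/g₀^2) with hCcdef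
  have hCc0 : 0 ≤ Cc := Finset.sum_nonneg (fun m _ => by positivity)
  set N₀ : ℕ := ⌈4*(B+1)^2 + 4*Cc/ε^2⌉₊ + 1 with hN₀def
  set Sx : ℝ := ∑ n ∈ Finset.range N₀, |x n| with hSxdef
  have hSx0 : 0 ≤ Sx := Finset.sum_nonneg (fun n _ => abs_nonneg _)
  set σ : ℝ := min (ε/2) (1/(2*Sx + 2)) with hσdef
  have hσ0 : 0 < σ := lt_min (by linarith) (by positivity)
  have hσε : σ ≤ ε := le_trans (min_le_left _ _) (by linarith)
  set α : ℕ → ℝ := fun n => (M n : ℝ) * lam n ^ (-σ) with hαdef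
  have hαsum : Summable α := summable_alpha lam M hpos b hMb hlac hσ0
  have hα0 : ∀ n, 0 ≤ α n := fun n => mul_nonneg (Nat.cast_nonneg _) (Real.rpow_nonneg (hpos n).le _)
  -- choose truncation N
  obtain ⟨N, hNN₀, hNtail⟩ : ∃ N, N₀ ≤ N ∧ (∑' k, α (k+N)) ≤ 1 := by
    have h1 : ∀ᶠ i in atTop, (∑' k, α (k+i)) < 1 :=
      (tendsto_sum_nat_add α).eventually_lt_const one_pos
    obtain ⟨N, hN⟩ := ((eventually_ge_atTop N₀).and h1).exists
    exact ⟨N, hN.1, le_of_lt hN.2⟩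
  -- coefficients
  set c : ℕ → ℂ := fun n => (M n : ℂ) * ((lam n : ℂ)) ^ (-((σ:ℂ) + (t₁:ℂ) * Complex.I)) with hcdef
  have hnormc : ∀ n, ‖c n‖ = α n := by
    intro n
    rw [hcdef]
    simp only
    rw [norm_mul, Complex.norm_natCast,
      Complex.norm_cpow_eq_rpow_re_of_pos (hpos n)]
    rw [hαdef]
    simp only
    congr 2
    simp [Complex.add_re, Complex.mul_re]
  have hterm : ∀ (n : ℕ) (θ : ℝ),
      (M n : ℂ) * ((lam n : ℂ)) ^ (-((σ:ℂ) + (((t₁ + θ : ℝ)):ℂ) * Complex.I))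
      = c n * Complex.exp (-(x n : ℂ) * (θ:ℝ) * Complex.I) := by
    intro n θ
    have hne : ((lam n : ℝ):ℂ) ≠ 0 := Complex.ofReal_ne_zero.mpr (ne_of_gt (hpos n))
    rw [hcdef]
    simp only
    rw [Complex.cpow_def_of_ne_zero hne, Complex.cpow_def_of_ne_zero hne, mul_assoc,
      ← Complex.exp_add]
    congr 2
    rw [← Complex.ofReal_log (hpos n).le]
    push_cast
    ring
  -- norms of exponentials
  have hexpnorm : ∀ (ξ θ : ℝ), ‖Complex.exp (-(ξ:ℂ) * (θ:ℝ) * Complex.I)‖ = 1 := by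
    intro ξ θ
    rw [Complex.norm_exp]
    have h : (-(ξ:ℂ) * (θ:ℝ) * Complex.I).re = 0 := by
      simp [Complex.mul_re]
    rw [h, Real.exp_zero]
  set S : ℝ → ℂ := fun u => ∑ n ∈ Finset.range N, c n * Complex.exp (-(x n:ℂ) * (u:ℝ) * Complex.I)
    with hSdef
  have hnorm_ce : ∀ (n : ℕ) (θ : ℝ), ‖c n * Complex.exp (-(x n:ℂ) * (θ:ℝ) * Complex.I)‖ = α n := by
    intro n θ
    rw [norm_mul, hnormc, hexpnorm, mul_one]
  have hsummc : ∀ θ : ℝ, Summable (fun n => c n * Complex.exp (-(x n:ℂ) * (θ:ℝ) * Complex.I)) := by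
    intro θ
    apply Summable.of_norm
    have heq : (fun n => ‖c n * Complex.exp (-(x n:ℂ) * (θ:ℝ) * Complex.I)‖) = α :=
      funext (fun n => hnorm_ce n θ)
    rw [heq]
    exact hαsum
  have hSdiff : ∀ θ : ℝ,
      ‖(∑' n : ℕ, (M n : ℂ) * ((lam n : ℂ)) ^ (-((σ:ℂ) + (((t₁ + θ : ℝ)):ℂ) * Complex.I))) - S θ‖ ≤ 1 := by
    intro θ
    have h1 : (∑' n : ℕ, (M n : ℂ) * ((lam n : ℂ)) ^ (-((σ:ℂ) + (((t₁ + θ:ℝ)):ℂ) * Complex.I)))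
        = ∑' n, c n * Complex.exp (-(x n:ℂ) * (θ:ℝ) * Complex.I) := tsum_congr (fun n => hterm n θ)
    have h2 := Summable.sum_add_tsum_nat_add N (hsummc θ)
    rw [h1, ← h2, hSdef]
    simp only
    rw [add_sub_cancel_left]
    have hsumnorm : Summable (fun k => ‖c (k+N) * Complex.exp (-(x (k+N):ℂ) * (θ:ℝ) * Complex.I)‖) := by
      have heq : (fun k => ‖c (k+N) * Complex.exp (-(x (k+N):ℂ) * (θ:ℝ) * Complex.I)‖)
          = fun k => α (k+N) := funext (fun k => hnorm_ce (k+N) θ)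
      rw [heq]
      exact (summable_nat_add_iff N).mpr hαsum
    calc ‖∑' (k:ℕ), c (k+N) * Complex.exp (-(x (k+N):ℂ) * (θ:ℝ) * Complex.I)‖
        ≤ ∑' (k:ℕ), ‖c (k+N) * Complex.exp (-(x (k+N):ℂ) * (θ:ℝ) * Complex.I)‖ :=
          norm_tsum_le_tsum_norm hsumnorm
      _ = ∑' (k:ℕ), α (k+N) := tsum_congr (fun k => hnorm_ce (k+N) θ)
      _ ≤ 1 := hNtail
  have hSb : ∀ u : ℝ, |u| ≤ 2*(ε/2) → ‖S u‖ ≤ B + 1 := by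
    intro u hu
    have hu' : |u| ≤ ε := by linarith
    have h1 := hBbound σ u hσ0 hσε hu'
    have h2 := hSdiff u
    calc ‖S u‖ = ‖(∑' n : ℕ, (M n : ℂ) * ((lam n : ℂ)) ^ (-((σ:ℂ) + (((t₁ + u : ℝ)):ℂ) * Complex.I)))
          - ((∑' n : ℕ, (M n : ℂ) * ((lam n : ℂ)) ^ (-((σ:ℂ) + (((t₁ + u : ℝ)):ℂ) * Complex.I))) - S u)‖ := by
          rw [sub_sub_cancel]
      _ ≤ _ + _ := norm_sub_le _ _
      _ ≤ B + 1 := add_le_add h1 h2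
  -- main integral inequality
  have hexp := expansion x c N (ε/2)
  have hJle : (∫ a in (-(ε/2))..(ε/2), ∫ bb in (-(ε/2))..(ε/2),
      ‖∑ n ∈ Finset.range N, c n * Complex.exp (-(x n : ℂ) * ((a + bb : ℝ)) * Complex.I)‖^2)
      ≤ (B+1)^2 * (2*(ε/2))^2 := double_bound (ε/2) (B+1) (by linarith) S hSb
  have key1 : (∑ m ∈ Finset.range N, ∑ n ∈ Finset.range N,
      ((c m * (starRingEnd ℂ) (c n)) * (KK (ε/2) (x m - x n))^2).re) ≤ (B+1)^2 * ε^2 := by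
    rw [← hexp]
    have h2 : (B+1)^2 * (2*(ε/2))^2 = (B+1)^2 * ε^2 := by ring
    rw [← h2]
    exact hJle
  -- diagonal and off-diagonal
  set A : ℝ := ∑ n ∈ Finset.range N, (α n)^2 with hAdef
  set W : ℕ → ℕ → ℝ := fun m n => 4/(x m - x n)^2 with hWdef
  have hKKdiag : ∀ m : ℕ, ((c m * (starRingEnd ℂ) (c m)) * (KK (ε/2) (x m - x m))^2).re
      = α m^2 * ε^2 := by
    intro m
    rw [sub_self, KK_zero]
    rw [Complex.mul_conj]
    have h1 : Complex.normSq (c m) = α m^2 := by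
      rw [Complex.normSq_eq_norm_sq, hnormc]
    have h2 : (2*(ε/2) : ℝ) = ε := by ring
    rw [h2, h1]
    rw [← Complex.ofReal_pow, ← Complex.ofReal_mul, Complex.ofReal_re]
  have hoffdiag : ∀ m n : ℕ, m ≠ n →
      -(((α m^2 + α n^2)/2) * W m n) ≤ ((c m * (starRingEnd ℂ) (c n)) * (KK (ε/2) (x m - x n))^2).re := by
    intro m n hmn
    have hΔne : x m - x n ≠ 0 := sub_ne_zero.mpr (fun h => hmn (hxstrict.injective h))
    have h1 : ‖(c m * (starRingEnd ℂ) (c n)) * (KK (ε/2) (x m - x n))^2‖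
        ≤ ((α m^2 + α n^2)/2) * W m n := by
      rw [norm_mul, norm_mul, norm_pow, RCLike.norm_conj, hnormc, hnormc]
      have h3 := KK_norm_le (ε/2) hΔne
      have h4 : ‖KK (ε/2) (x m - x n)‖^2 ≤ 4/(x m - x n)^2 := by
        have h5 : (2/|x m - x n|)^2 = 4/(x m - x n)^2 := by
          rw [div_pow, sq_abs]
          norm_num
        rw [← h5]
        apply pow_le_pow_left₀ (norm_nonneg _) h3
      calc α m * α n * ‖KK (ε/2) (x m - x n)‖^2 ≤ α m * α n * (4/(x m - x n)^2) := by
            apply mul_le_mul_of_nonneg_left h4 (mul_nonneg (hα0 m) (hα0 n))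
        _ ≤ ((α m^2 + α n^2)/2) * W m n := by
            rw [hWdef]
            simp only
            apply mul_le_mul_of_nonneg_right _ (by positivity)
            nlinarith [sq_nonneg (α m - α n)]
    have h6 := Complex.abs_re_le_norm ((c m * (starRingEnd ℂ) (c n)) * (KK (ε/2) (x m - x n))^2)
    have h7 := (abs_le.mp (le_trans h6 h1)).1
    linarith [h7]
  -- lower bound: ε²A - Q ≤ sum
  set Q : ℝ := ∑ m ∈ Finset.range N, ∑ n ∈ Finset.range N,
    (if m = n then 0 else ((α m^2 + α n^2)/2) * W m n) with hQdef
  have hlow : ε^2 * A - Q ≤ ∑ m ∈ Finset.range N, ∑ n ∈ Finset.range N,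
      ((c m * (starRingEnd ℂ) (c n)) * (KK (ε/2) (x m - x n))^2).re := by
    have hper : ∀ m ∈ Finset.range N, ∀ n ∈ Finset.range N,
        (if m = n then α m^2 * ε^2 else 0) - (if m = n then 0 else ((α m^2 + α n^2)/2) * W m n)
        ≤ ((c m * (starRingEnd ℂ) (c n)) * (KK (ε/2) (x m - x n))^2).re := by
      intro m _ n _
      by_cases h : m = n
      · subst h
        rw [if_pos rfl, if_pos rfl, hKKdiag m]
        simp
      · rw [if_neg h, if_neg h, zero_sub]
        exact hoffdiag m n h
    have hdiagsum : ∑ m ∈ Finset.range N, ∑ n ∈ Finset.range N,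
        (if m = n then α m^2 * ε^2 else 0) = ε^2 * A := by
      have hin : ∀ m ∈ Finset.range N, ∑ n ∈ Finset.range N,
          (if m = n then α m^2 * ε^2 else 0) = α m^2 * ε^2 := by
        intro m hm
        rw [Finset.sum_ite_eq (Finset.range N) m (fun _ => α m^2 * ε^2), if_pos hm]
      rw [Finset.sum_congr rfl hin, hAdef, Finset.mul_sum]
      apply Finset.sum_congr rfl
      intro m _
      ring
    calc ε^2 * A - Q
        = ∑ m ∈ Finset.range N, ∑ n ∈ Finset.range N,
          ((if m = n then α m^2 * ε^2 else 0) - (if m = n then 0 else ((α m^2 + α n^2)/2) * W m n)) := by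
          rw [hQdef]
          rw [← hdiagsum, ← Finset.sum_sub_distrib]
          apply Finset.sum_congr rfl
          intro m _
          rw [← Finset.sum_sub_distrib]
      _ ≤ _ := Finset.sum_le_sum (fun m hm => Finset.sum_le_sum (fun n hn => hper m hm n hn))
  -- Q upper bound
  have hQle : Q ≤ Cc + (ε^2/2) * A := by
    have hsplit : Q = (∑ m ∈ Finset.range N, ∑ n ∈ Finset.range N,
        (if m = n then 0 else (α m^2/2) * W m n))
        + (∑ m ∈ Finset.range N, ∑ n ∈ Finset.range N,
        (if m = n then 0 else (α n^2/2) * W m n)) := by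
      rw [hQdef, ← Finset.sum_add_distrib]
      apply Finset.sum_congr rfl
      intro m _
      rw [← Finset.sum_add_distrib]
      apply Finset.sum_congr rfl
      intro n _
      by_cases h : m = n
      · simp [h]
      · rw [if_neg h, if_neg h, if_neg h]
        ring
    have hswap : (∑ m ∈ Finset.range N, ∑ n ∈ Finset.range N,
        (if m = n then 0 else (α n^2/2) * W m n))
        = ∑ m ∈ Finset.range N, ∑ n ∈ Finset.range N,
        (if m = n then 0 else (α m^2/2) * W m n) := by
      rw [Finset.sum_comm]
      apply Finset.sum_congr rfl
      intro m _
      apply Finset.sum_congr rfl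
      intro n _
      by_cases h : m = n
      · simp [h]
      · rw [if_neg (fun hh => h hh.symm), if_neg h]
        have hWsym : W n m = W m n := by
          rw [hWdef]
          simp only
          rw [show (x n - x m)^2 = (x m - x n)^2 from by ring]
        rw [hWsym]
    have hrow : ∀ m ∈ Finset.range N, ∑ n ∈ Finset.range N,
        (if m = n then 0 else (α m^2/2) * W m n)
        = (α m^2/2) * ∑ n ∈ (Finset.range N).erase m, W m n := by
      intro m _
      rw [Finset.mul_sum]
      have hzero : (if m = m then (0:ℝ) else (α m^2/2) * W m m) = 0 := if_pos rfl
      rw [← Finset.sum_erase (Finset.range N) hzero]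
      apply Finset.sum_congr rfl
      intro n hn
      rw [if_neg (fun hh => (Finset.ne_of_mem_erase hn) hh.symm)]
    have hQeq : Q = ∑ m ∈ Finset.range N, α m^2 * ∑ n ∈ (Finset.range N).erase m, W m n := by
      rw [hsplit, hswap, ← Finset.sum_add_distrib]
      rw [Finset.sum_congr rfl (fun m hm => by rw [hrow m hm])]
      apply Finset.sum_congr rfl
      intro m _
      ring
    have hrowb : ∀ m ∈ Finset.range N,
        α m^2 * ∑ n ∈ (Finset.range N).erase m, W m n
        ≤ (if m < K₁ then ((M m:ℝ) * (1 + lam m ^ (-ε)))^2 * (16/g₀^2) else 0) + (ε^2/2) * α m^2 := by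
      intro m _
      have hWrow : (∑ n ∈ (Finset.range N).erase m, W m n)
          = ∑ n ∈ (Finset.range N).erase m, 4/(x m - x n)^2 := by
        apply Finset.sum_congr rfl
        intro n _
        rw [hWdef]
      have hrownn : 0 ≤ ∑ n ∈ (Finset.range N).erase m, W m n := by
        rw [hWrow]
        exact Finset.sum_nonneg (fun n _ => by positivity)
      by_cases h : m < K₁
      · rw [if_pos h]
        have h1 : ∑ n ∈ (Finset.range N).erase m, W m n ≤ 16/g₀^2 := by
          rw [hWrow]
          exact row_glob x g₀ hg₀pos hsep0 N m
        have h2 : α m ≤ (M m:ℝ) * (1 + lam m ^ (-ε)) := by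
          rw [hαdef]
          simp only
          apply mul_le_mul_of_nonneg_left _ (Nat.cast_nonneg _)
          rcases le_or_gt 1 (lam m) with hl | hl
          · have h3 : lam m ^ (-σ) ≤ lam m ^ (0:ℝ) :=
              Real.rpow_le_rpow_of_exponent_le hl (by linarith)
            rw [Real.rpow_zero] at h3
            have hp : (0:ℝ) ≤ lam m ^ (-ε) := Real.rpow_nonneg (hpos m).le _
            linarith
          · have h3 : lam m ^ (-σ) ≤ lam m ^ (-ε) :=
              Real.rpow_le_rpow_of_exponent_ge (hpos m) (le_of_lt hl) (by linarith)
            linarith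
        have h3 : α m^2 ≤ ((M m:ℝ) * (1 + lam m ^ (-ε)))^2 := by
          nlinarith [hα0 m]
        have h4 : (0:ℝ) ≤ (ε^2/2) * α m^2 := by positivity
        calc α m^2 * ∑ n ∈ (Finset.range N).erase m, W m n
            ≤ ((M m:ℝ) * (1 + lam m ^ (-ε)))^2 * ∑ n ∈ (Finset.range N).erase m, W m n :=
              mul_le_mul_of_nonneg_right h3 hrownn
          _ ≤ ((M m:ℝ) * (1 + lam m ^ (-ε)))^2 * (16/g₀^2) :=
              mul_le_mul_of_nonneg_left h1 (by positivity)
          _ ≤ ((M m:ℝ) * (1 + lam m ^ (-ε)))^2 * (16/g₀^2) + (ε^2/2) * α m^2 :=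
              le_add_of_nonneg_right h4
      · rw [if_neg h]
        push_neg at h
        have h1 : ∑ n ∈ (Finset.range N).erase m, W m n ≤ 20/G^2 := by
          rw [hWrow]
          exact row_far x G hG0 K₀ N m hxmono hsepG (by omega)
        have h2 : 20/G^2 ≤ ε^2/2 := by
          have hG2 : G^2 = 64/ε^2 := by
            rw [hGdef, div_pow]
            norm_num
          rw [hG2, div_div_eq_mul_div, div_le_div_iff₀ (by norm_num) (by norm_num)]
          nlinarith [sq_nonneg ε]
        calc α m^2 * ∑ n ∈ (Finset.range N).erase m, W m n
            ≤ α m^2 * (ε^2/2) := by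
              apply mul_le_mul_of_nonneg_left (le_trans h1 h2) (sq_nonneg _)
          _ = 0 + (ε^2/2) * α m^2 := by ring
    have hsum3 : (∑ m ∈ Finset.range N,
        (if m < K₁ then ((M m:ℝ) * (1 + lam m ^ (-ε)))^2 * (16/g₀^2) else 0)) ≤ Cc := by
      rw [← Finset.sum_filter, hCcdef]
      apply Finset.sum_le_sum_of_subset_of_nonneg
      · intro i hi
        simp only [Finset.mem_filter, Finset.mem_range] at hi
        exact Finset.mem_range.mpr hi.2
      · intro i _ _
        positivity
    calc Q = ∑ m ∈ Finset.range N, α m^2 * ∑ n ∈ (Finset.range N).erase m, W m n := hQeq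
      _ ≤ ∑ m ∈ Finset.range N, ((if m < K₁ then ((M m:ℝ) * (1 + lam m ^ (-ε)))^2 * (16/g₀^2) else 0)
          + (ε^2/2) * α m^2) := Finset.sum_le_sum hrowb
      _ = (∑ m ∈ Finset.range N, (if m < K₁ then ((M m:ℝ) * (1 + lam m ^ (-ε)))^2 * (16/g₀^2) else 0))
          + (ε^2/2) * A := by
          rw [Finset.sum_add_distrib, hAdef, Finset.mul_sum]
      _ ≤ Cc + (ε^2/2) * A := add_le_add_left hsum3 _
  -- upper bound for A
  have hAup : A ≤ 2*(B+1)^2 + 2*Cc/ε^2 := by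
    have h1 : ε^2 * A - Q ≤ (B+1)^2 * ε^2 := le_trans hlow key1
    have hε2 : (0:ℝ) < ε^2 := by positivity
    have h4 : A ≤ (2*(B+1)^2*ε^2 + 2*Cc)/ε^2 := by
      rw [le_div_iff₀ hε2]
      nlinarith [hQle, h1]
    have h5 : (2*(B+1)^2*ε^2 + 2*Cc)/ε^2 = 2*(B+1)^2 + 2*Cc/ε^2 := by
      field_simp
    rw [h5] at h4
    exact h4
  -- lower bound for A
  have hAlow : (N₀:ℝ) - 1 ≤ A := by
    have h1 : ∀ n, Real.exp (-(2*σ) * x n) ≤ α n^2 := by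
      intro n
      have hM1 : (1:ℝ) ≤ (M n:ℝ) := by exact_mod_cast hM n
      have h2 : lam n ^ (-σ) = Real.exp (-σ * x n) := by
        rw [Real.rpow_def_of_pos (hpos n)]
        congr 1
        rw [hxdef]
        ring
      have h3 : Real.exp (-σ * x n) ≤ α n := by
        rw [hαdef]
        simp only
        rw [h2]
        nlinarith [Real.exp_pos (-σ * x n)]
      have h4 : Real.exp (-σ*x n) * Real.exp (-σ*x n) = Real.exp (-(2*σ)*x n) := by
        rw [← Real.exp_add]
        congr 1
        ring
      nlinarith [Real.exp_pos (-σ*x n), h3]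
    have h5 : ∀ n, 1 - 2*σ*|x n| ≤ Real.exp (-(2*σ) * x n) := by
      intro n
      have h6 := Real.add_one_le_exp (-(2*σ)*x n)
      have h7 : -(2*σ*|x n|) ≤ -(2*σ)*x n := by
        have h8 := le_abs_self (x n)
        have h9 := neg_abs_le (x n)
        nlinarith [hσ0.le]
      linarith
    have h7 : ∑ n ∈ Finset.range N₀, α n^2 ≤ A := by
      rw [hAdef]
      apply Finset.sum_le_sum_of_subset_of_nonneg (Finset.range_subset_range.mpr hNN₀)
      intro i _ _
      positivity
    have h8 : (N₀:ℝ) - 2*σ*Sx ≤ ∑ n ∈ Finset.range N₀, α n^2 := by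
      calc (N₀:ℝ) - 2*σ*Sx = ∑ n ∈ Finset.range N₀, (1 - 2*σ*|x n|) := by
            rw [Finset.sum_sub_distrib, Finset.sum_const, Finset.card_range, hSxdef,
              Finset.mul_sum]
            simp only [nsmul_eq_mul, mul_one]
        _ ≤ ∑ n ∈ Finset.range N₀, Real.exp (-(2*σ) * x n) :=
            Finset.sum_le_sum (fun n _ => h5 n)
        _ ≤ ∑ n ∈ Finset.range N₀, α n^2 := Finset.sum_le_sum (fun n _ => h1 n)
    have h9 : 2*σ*Sx ≤ 1 := by
      have hσle : σ ≤ 1/(2*Sx+2) := min_le_right _ _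
      have hpos2 : (0:ℝ) < 2*Sx+2 := by linarith
      have hinv : 1/(2*Sx+2) * (2*Sx+2) = 1 := by
        field_simp
      nlinarith [hSx0, hσ0.le]
    linarith
  -- numeric contradiction
  have hceil : 4*(B+1)^2 + 4*Cc/ε^2 ≤ (N₀:ℝ) - 1 := by
    rw [hN₀def]
    push_cast
    have := Nat.le_ceil (4*(B+1)^2 + 4*Cc/ε^2)
    linarith
  have hB2 : (1:ℝ) ≤ (B+1)^2 := by nlinarith
  have hCc2 : 2*Cc/ε^2 ≤ 4*Cc/ε^2 := by
    gcongr
    linarith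
  clear_value A Cc N₀ B ε
  linarith only [hAup, hAlow, hceil, hB2, hCc2]


/-- Proposition 5.1 of the paper, lacunary operators. If
`Mₙ = O(n^b)` and `λ_{n+1}/λₙ → ∞`, then the zeta series converges and is holomorphic
on `Re s > 0`, but admits no meromorphic continuation through the line `Re s = 0`. -/
theorem stmt_17 (lam : ℕ → ℝ) (M : ℕ → ℕ)
    (hpos : ∀ n, 0 < lam n) (hmono : StrictMono lam) (hM : ∀ n, 0 < M n)
    (b : ℝ) (hb : 0 ≤ b)
    (hMb : (fun n : ℕ => (M n : ℝ)) =O[atTop] fun n : ℕ => (n : ℝ) ^ b)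
    (hlac : Tendsto (fun n : ℕ => lam (n+1) / lam n) atTop atTop) :
    (∀ s : ℂ, 0 < s.re → Summable fun n : ℕ => (M n : ℂ) * ((lam n : ℂ)) ^ (-s)) ∧
    DifferentiableOn ℂ (fun s : ℂ => ∑' n : ℕ, (M n : ℂ) * ((lam n : ℂ)) ^ (-s))
      {s : ℂ | 0 < s.re} ∧
    ¬ ∃ (s₀ : ℂ) (U : Set ℂ) (g : ℂ → ℂ), s₀.re = 0 ∧ IsOpen U ∧ s₀ ∈ U ∧
        MeromorphicOn g U ∧
        ∀ s ∈ U, 0 < s.re → g s = ∑' n : ℕ, (M n : ℂ) * ((lam n : ℂ)) ^ (-s) := by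
  exact ⟨fun s hs => summable_zeta lam M hpos b hMb hlac hs,
    zeta_diffOn lam M hpos b hMb hlac,
    no_mero lam M hpos hmono hM b hb hMb hlac⟩
end

section
/- Let (λ_n)_{n∈ℕ} be a strictly increasing sequence of positive reals with λ_n → ∞ and (M_n)_{n∈ℕ} positive integers, such that the zeta series ζ(s) = Σ_n M_n λ_n^(−s) has finite abscissa of convergence equal to L ≥ 0. Suppose N(λ) / (λ^L F(λ)) → 1 as λ → ∞, where F : (0,∞) → (0,∞) is slowly varying, i.e. F(τ x)/F(τ) → 1 as τ → ∞ for every x > 0. Then the heat trace satisfies h(t) / ( Γ(L+1) t^(−L) F(1/t) ) → 1 as t ↓ 0. -/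
open Filter Topology Asymptotics

open Set MeasureTheory in
set_option maxHeartbeats 1000000 in
/-- Corollary 5.3 of the paper; Hardy–Littlewood/Karamata. If the
zeta series has finite abscissa of convergence `L ≥ 0` and the spectral growth function
satisfies `N(λ) ∼ λ^L F(λ)` with `F` slowly varying, then
`h(t) ∼ Γ(L+1) t^{-L} F(1/t)` as `t ↓ 0`. -/
theorem stmt_18 (lam : ℕ → ℝ) (M : ℕ → ℕ)
    (hpos : ∀ n, 0 < lam n) (hmono : StrictMono lam)
    (htop : Tendsto lam atTop atTop) (hM : ∀ n, 0 < M n)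
    (N : ℝ → ℝ)
    (hN : ∀ x : ℝ, N x = ∑' n : ℕ, Set.indicator {m : ℕ | lam m ≤ x} (fun m => (M m : ℝ)) n)
    (L : ℝ) (hL0 : 0 ≤ L)
    (hconv : ∀ s : ℝ, L < s → Summable fun n : ℕ => (M n : ℝ) * lam n ^ (-s))
    (hdiv : ∀ s : ℝ, s < L → ¬ Summable fun n : ℕ => (M n : ℝ) * lam n ^ (-s))
    (F : ℝ → ℝ) (hFpos : ∀ x : ℝ, 0 < x → 0 < F x)
    (hslow : ∀ x : ℝ, 0 < x → Tendsto (fun τ : ℝ => F (τ * x) / F τ) atTop (𝓝 1))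
    (hNF : Tendsto (fun l : ℝ => N l / (l ^ L * F l)) atTop (𝓝 1)) :
    Tendsto (fun t : ℝ => (∑' n : ℕ, (M n : ℝ) * Real.exp (-t * lam n))
        / (Real.Gamma (L+1) * t ^ (-L) * F (1/t))) (𝓝[>] (0:ℝ)) (𝓝 1) := by
  have hGamma_pos : 0 < Real.Gamma (L+1) := Real.Gamma_pos_of_pos (by linarith)
  -- basic facts about `N`
  have hsummInd : ∀ x : ℝ,
      Summable (fun n => Set.indicator {m : ℕ | lam m ≤ x} (fun m => (M m : ℝ)) n) := by
    intro x
    obtain ⟨k, hk⟩ := eventually_atTop.mp (htop.eventually (eventually_gt_atTop x))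
    apply summable_of_ne_finset_zero (s := Finset.range k)
    intro n hn
    simp only [Finset.mem_range, not_lt] at hn
    exact Set.indicator_of_notMem (by simpa using (not_le_of_gt (hk n hn))) _
  have hNmono : Monotone N := by
    intro x y hxy
    rw [hN x, hN y]
    refine Summable.tsum_le_tsum (fun n => ?_) (hsummInd x) (hsummInd y)
    exact Set.indicator_le_indicator_of_subset (fun m hm => le_trans hm hxy)
      (fun a => by positivity) n
  have hNnonneg : ∀ x, 0 ≤ N x := by
    intro x
    rw [hN x]
    exact tsum_nonneg (fun n => Set.indicator_nonneg (fun a _ => by positivity) n)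
  have hNmeas : Measurable N := hNmono.measurable
  -- summability of the heat trace
  have hS : ∀ t : ℝ, 0 < t → Summable (fun n : ℕ => (M n : ℝ) * Real.exp (-t * lam n)) := by
    intro t ht
    have hs := hconv (L+1) (by linarith)
    have h1 : Tendsto (fun n => lam n ^ (L+1) * Real.exp (-t * lam n)) atTop (𝓝 0) :=
      (tendsto_rpow_mul_exp_neg_mul_atTop_nhds_zero (L+1) t ht).comp htop
    have h2 : ∀ᶠ n in atTop,
        (M n : ℝ) * Real.exp (-t * lam n) ≤ (M n : ℝ) * lam n ^ (-(L+1)) := by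
      filter_upwards [h1.eventually (eventually_le_nhds one_pos)] with n hn
      have hl := hpos n
      have hineq : Real.exp (-t * lam n) ≤ lam n ^ (-(L+1)) := by
        have hp := Real.rpow_pos_of_pos hl (L+1)
        rw [Real.rpow_neg hl.le, inv_eq_one_div, le_div_iff₀ hp, mul_comm]
        exact hn
      exact mul_le_mul_of_nonneg_left hineq (by positivity)
    obtain ⟨k, hk⟩ := eventually_atTop.mp h2
    have hsk : Summable (fun n => (M (n+k) : ℝ) * lam (n+k) ^ (-(L+1))) :=
      (summable_nat_add_iff k).2 hs
    exact (summable_nat_add_iff k).1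
      (hsk.of_nonneg_of_le (fun n => by positivity) (fun n => hk (n+k) (by omega)))
  -- integral representation of the heat trace
  have hINT : ∀ t : ℝ, 0 < t →
      ∫ u in Ioi (0:ℝ), Real.exp (-u) * N (u/t)
        = ∑' n : ℕ, (M n : ℝ) * Real.exp (-t * lam n) := by
    intro t ht
    set term : ℕ → ℝ → ℝ :=
      fun n => (Ici (t * lam n)).indicator (fun v => (M n : ℝ) * Real.exp (-v)) with hterm
    have hexp : IntegrableOn (fun x : ℝ => Real.exp (-x)) (Ioi 0) := by
      simpa using Real.GammaIntegral_convergent one_pos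
    have hterm_int : ∀ n, Integrable (term n) (volume.restrict (Ioi 0)) := fun n =>
      ((hexp.const_mul ((M n : ℝ))).indicator measurableSet_Ici)
    have hterm_val : ∀ n, ∫ u in Ioi (0:ℝ), term n u = (M n : ℝ) * Real.exp (-(t * lam n)) := by
      intro n
      have hc : (0:ℝ) < t * lam n := mul_pos ht (hpos n)
      have hss : Ici (t * lam n) ∩ Ioi (0:ℝ) = Ici (t * lam n) :=
        Set.inter_eq_self_of_subset_left (fun x hx => lt_of_lt_of_le hc hx)
      rw [hterm]
      rw [integral_indicator measurableSet_Ici, Measure.restrict_restrict measurableSet_Ici,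
        hss, integral_Ici_eq_integral_Ioi, MeasureTheory.integral_const_mul, integral_exp_neg_Ioi]
    have hterm_nonneg : ∀ n u, 0 ≤ term n u := fun n u =>
      Set.indicator_nonneg (fun a _ => by positivity) u
    have hnorm : Summable fun n => ∫ u in Ioi (0:ℝ), ‖term n u‖ := by
      apply Summable.congr ((hS t ht).congr (fun n => by rw [neg_mul]))
      intro n
      rw [← hterm_val n]
      exact (integral_congr_ae
        (ae_of_all _ (fun u => (Real.norm_of_nonneg (hterm_nonneg n u))))).symm
    have key : ∀ u : ℝ, Real.exp (-u) * N (u/t) = ∑' n, term n u := by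
      intro u
      rw [hN (u/t), ← tsum_mul_left]
      refine tsum_congr (fun n => ?_)
      have hmem : (n ∈ {m : ℕ | lam m ≤ u / t}) ↔ t * lam n ≤ u := by
        rw [Set.mem_setOf_eq, le_div_iff₀ ht, mul_comm]
      by_cases h : t * lam n ≤ u
      · rw [Set.indicator_of_mem (hmem.2 h)]
        simp only [hterm]
        rw [Set.indicator_of_mem (show u ∈ Ici (t * lam n) from h)]
        ring
      · rw [Set.indicator_of_notMem (fun hh => h (hmem.1 hh))]
        simp only [hterm]
        rw [Set.indicator_of_notMem (show u ∉ Ici (t * lam n) from h)]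
        ring
    calc ∫ u in Ioi (0:ℝ), Real.exp (-u) * N (u/t)
        = ∫ u in Ioi (0:ℝ), ∑' n, term n u := integral_congr_ae (ae_of_all _ key)
      _ = ∑' n, ∫ u in Ioi (0:ℝ), term n u :=
          (integral_tsum_of_summable_integral_norm hterm_int hnorm).symm
      _ = ∑' n : ℕ, (M n : ℝ) * Real.exp (-t * lam n) :=
          tsum_congr (fun n => by rw [hterm_val n, neg_mul])
  -- eventual positivity of N
  have hNpos : ∀ᶠ τ in atTop, 0 < N τ := by
    filter_upwards [hNF.eventually (eventually_gt_nhds (by norm_num : (1:ℝ)/2 < 1)),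
      eventually_gt_atTop (0:ℝ)] with τ h1 h2
    have hp : 0 < τ ^ L * F τ := mul_pos (Real.rpow_pos_of_pos h2 L) (hFpos τ h2)
    rw [lt_div_iff₀ hp] at h1
    nlinarith
  -- the ratio limit N(τx)/N(τ) → x^L
  have hratio : ∀ x : ℝ, 0 < x →
      Tendsto (fun τ : ℝ => N (τ * x) / N τ) atTop (𝓝 (x ^ L)) := by
    intro x hx
    have hmul : Tendsto (fun τ : ℝ => τ * x) atTop atTop :=
      Tendsto.atTop_mul_const hx tendsto_id
    have h1 : Tendsto (fun τ : ℝ => N (τ * x) / ((τ * x) ^ L * F (τ * x))) atTop (𝓝 1) :=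
      hNF.comp hmul
    have h2 := hslow x hx
    have h3 : Tendsto (fun τ : ℝ => (τ ^ L * F τ) / N τ) atTop (𝓝 1) := by
      have h := hNF.inv₀ one_ne_zero
      simp only [inv_div, inv_one] at h
      exact h
    have hP := ((h1.mul h2).mul h3).mul_const (x ^ L)
    rw [show (1:ℝ) * 1 * 1 * x ^ L = x ^ L by ring] at hP
    refine hP.congr' ?_
    filter_upwards [hNpos, eventually_gt_atTop (0:ℝ)] with τ hNτ hτ
    have hτx : 0 < τ * x := mul_pos hτ hx
    have hrw : (τ * x) ^ L = τ ^ L * x ^ L := Real.mul_rpow hτ.le hx.le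
    rw [hrw]
    have e1 := (Real.rpow_pos_of_pos hτ L).ne'
    have e2 := (Real.rpow_pos_of_pos hx L).ne'
    have e3 := (hFpos τ hτ).ne'
    have e4 := (hFpos _ hτx).ne'
    have e5 := hNτ.ne'
    field_simp
  -- doubling bound
  have h2L : (2:ℝ) ^ L < 2 ^ (L+1) :=
    Real.rpow_lt_rpow_of_exponent_lt one_lt_two (by linarith)
  have hdbl_ev : ∀ᶠ τ in atTop, N (τ * 2) ≤ 2 ^ (L+1) * N τ := by
    filter_upwards [(hratio 2 two_pos).eventually (eventually_lt_nhds h2L), hNpos]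
      with τ h1 h2
    rw [div_lt_iff₀ h2] at h1
    linarith
  obtain ⟨X₀, hX₀⟩ := eventually_atTop.mp (hdbl_ev.and hNpos)
  set X : ℝ := max X₀ 1 with hXdef
  have hX1 : 1 ≤ X := le_max_right _ _
  have hXpos : 0 < X := lt_of_lt_of_le one_pos hX1
  have hdbl : ∀ τ, X ≤ τ → N (τ * 2) ≤ 2 ^ (L+1) * N τ :=
    fun τ hτ => (hX₀ τ (le_trans (le_max_left _ _) hτ)).1
  have hNposX : ∀ τ, X ≤ τ → 0 < N τ :=
    fun τ hτ => (hX₀ τ (le_trans (le_max_left _ _) hτ)).2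
  -- domination: N(τu) ≤ (2 max(u,1))^(L+1) N(τ) for τ ≥ X
  have hdom : ∀ τ, X ≤ τ → ∀ u, 0 < u → N (τ * u) ≤ (2 * max u 1) ^ (L+1) * N τ := by
    intro τ hτ u hu
    have hτ0 : 0 < τ := lt_of_lt_of_le hXpos hτ
    have hpow : ∀ k : ℕ, N (τ * 2 ^ k) ≤ (2 ^ (L+1) : ℝ) ^ k * N τ := by
      intro k
      induction k with
      | zero => simp
      | succ k ih =>
        have hτk : X ≤ τ * 2 ^ k :=
          le_trans hτ (le_mul_of_one_le_right hτ0.le (one_le_pow₀ one_le_two))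
        calc N (τ * 2 ^ (k+1)) = N ((τ * 2 ^ k) * 2) := by ring_nf
          _ ≤ 2 ^ (L+1) * N (τ * 2 ^ k) := hdbl _ hτk
          _ ≤ 2 ^ (L+1) * ((2 ^ (L+1) : ℝ) ^ k * N τ) :=
              mul_le_mul_of_nonneg_left ih (Real.rpow_nonneg (by norm_num) _)
          _ = (2 ^ (L+1) : ℝ) ^ (k+1) * N τ := by ring
    set m := max u 1 with hm
    have hm1 : 1 ≤ m := le_max_right _ _
    obtain ⟨k, hk1, hk2⟩ := exists_nat_pow_near hm1 (one_lt_two (α := ℝ))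
    have h2k : m ≤ (2:ℝ) ^ (k+1) := hk2.le
    have h2k' : (2:ℝ) ^ (k+1) ≤ 2 * m := by
      rw [pow_succ, mul_comm]
      exact mul_le_mul_of_nonneg_left hk1 (by norm_num)
    calc N (τ * u) ≤ N (τ * 2 ^ (k+1)) :=
          hNmono (mul_le_mul_of_nonneg_left (le_trans (le_max_left u 1) h2k) hτ0.le)
      _ ≤ (2 ^ (L+1) : ℝ) ^ (k+1) * N τ := hpow (k+1)
      _ ≤ (2 * m) ^ (L+1) * N τ := by
          apply mul_le_mul_of_nonneg_right _ (hNnonneg τ)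
          have hexch : ((2:ℝ) ^ (L+1)) ^ (k+1) = ((2:ℝ) ^ (k+1)) ^ (L+1) := by
            rw [← Real.rpow_natCast ((2:ℝ) ^ (L+1)) (k+1), ← Real.rpow_mul (by norm_num),
              mul_comm, Real.rpow_mul (by norm_num), Real.rpow_natCast]
          rw [hexch]
          exact Real.rpow_le_rpow (by positivity) h2k' (by linarith)
  -- dominated convergence
  have hbound_int :
      Integrable (fun u : ℝ => Real.exp (-u) * (2 * max u 1) ^ (L+1))
        (volume.restrict (Ioi 0)) := by
    have hexp : IntegrableOn (fun x : ℝ => Real.exp (-x)) (Ioi 0) := by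
      simpa using Real.GammaIntegral_convergent one_pos
    have hG : IntegrableOn (fun x : ℝ => Real.exp (-x) * x ^ (L+1)) (Ioi 0) := by
      have h := Real.GammaIntegral_convergent (show (0:ℝ) < L + 2 by linarith)
      simpa [show L + 2 - 1 = L + 1 by ring] using h
    have hGmaj : Integrable
        (fun u : ℝ => (2:ℝ) ^ (L+1) * Real.exp (-u)
          + (2:ℝ) ^ (L+1) * (Real.exp (-u) * u ^ (L+1))) (volume.restrict (Ioi 0)) :=
      (hexp.const_mul _).add (hG.const_mul _)
    refine hGmaj.mono' ?_ ?_
    · apply Continuous.aestronglyMeasurable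
      have hc : Continuous fun u : ℝ => 2 * max u 1 :=
        continuous_const.mul (continuous_id.max continuous_const)
      exact (Real.continuous_exp.comp continuous_neg).mul
        (hc.rpow_const (fun x => Or.inl (by positivity)))
    · rw [ae_restrict_iff' measurableSet_Ioi]
      refine ae_of_all _ (fun u hu => ?_)
      have hu0 : (0:ℝ) < u := hu
      have hval : (0:ℝ) ≤ Real.exp (-u) * (2 * max u 1) ^ (L+1) := by positivity
      rw [Real.norm_of_nonneg hval]
      have hsplit : (2 * max u 1 : ℝ) ^ (L+1) = 2 ^ (L+1) * (max u 1) ^ (L+1) :=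
        Real.mul_rpow (by norm_num) (by positivity)
      have hmaxle : (max u 1 : ℝ) ^ (L+1) ≤ 1 + u ^ (L+1) := by
        rcases le_total u 1 with h | h
        · rw [max_eq_right h, Real.one_rpow]
          have : (0:ℝ) ≤ u ^ (L+1) := Real.rpow_nonneg hu0.le _
          linarith
        · rw [max_eq_left h]
          linarith
      calc Real.exp (-u) * (2 * max u 1) ^ (L+1)
          = 2 ^ (L+1) * ((max u 1) ^ (L+1) * Real.exp (-u)) := by rw [hsplit]; ring
        _ ≤ 2 ^ (L+1) * ((1 + u ^ (L+1)) * Real.exp (-u)) := by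
            apply mul_le_mul_of_nonneg_left _ (Real.rpow_nonneg (by norm_num) _)
            exact mul_le_mul_of_nonneg_right hmaxle (Real.exp_nonneg _)
        _ = 2 ^ (L+1) * Real.exp (-u) + 2 ^ (L+1) * (Real.exp (-u) * u ^ (L+1)) := by ring
  have hDCT : Tendsto (fun t : ℝ => ∫ u in Ioi (0:ℝ), Real.exp (-u) * (N (u/t) / N (1/t)))
      (𝓝[>] (0:ℝ)) (𝓝 (∫ u in Ioi (0:ℝ), Real.exp (-u) * u ^ L)) := by
    apply tendsto_integral_filter_of_dominated_convergence
      (fun u : ℝ => Real.exp (-u) * (2 * max u 1) ^ (L+1))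
    · refine Eventually.of_forall (fun t => ?_)
      exact ((Real.measurable_exp.comp measurable_neg).mul
        ((hNmeas.comp (measurable_id.div_const t)).div_const _)).aestronglyMeasurable
    · have hmem : Ioo (0:ℝ) (1/X) ∈ 𝓝[>] (0:ℝ) :=
        Ioo_mem_nhdsGT (by positivity)
      filter_upwards [hmem] with t ht
      rw [ae_restrict_iff' measurableSet_Ioi]
      refine ae_of_all _ (fun u hu => ?_)
      have hu0 : (0:ℝ) < u := hu
      have ht0 : (0:ℝ) < t := ht.1
      have h1t : X ≤ 1/t := by
        rw [le_div_iff₀ ht0]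
        have h := ht.2
        rw [lt_div_iff₀ hXpos] at h
        linarith
      have hN1t : 0 < N (1/t) := hNposX _ h1t
      have hdomu : N (u/t) ≤ (2 * max u 1) ^ (L+1) * N (1/t) := by
        have := hdom (1/t) h1t u hu0
        rwa [show (1/t) * u = u/t by ring] at this
      have hvalnn : (0:ℝ) ≤ Real.exp (-u) * (N (u/t) / N (1/t)) := by
        have := hNnonneg (u/t)
        positivity
      rw [Real.norm_of_nonneg hvalnn]
      apply mul_le_mul_of_nonneg_left _ (Real.exp_nonneg _)
      rw [div_le_iff₀ hN1t]
      exact hdomu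
    · exact hbound_int
    · rw [ae_restrict_iff' measurableSet_Ioi]
      refine ae_of_all _ (fun u hu => ?_)
      have hu0 : (0:ℝ) < u := hu
      have h1 := (hratio u hu0).comp tendsto_inv_nhdsGT_zero
      have h2 : Tendsto (fun t : ℝ => N (u/t) / N (1/t)) (𝓝[>] (0:ℝ)) (𝓝 (u ^ L)) := by
        apply h1.congr
        intro t
        simp only [Function.comp_apply]
        rw [one_div, show t⁻¹ * u = u/t by rw [div_eq_mul_inv, mul_comm]]
      exact h2.const_mul _
  have hGam : ∫ u in Ioi (0:ℝ), Real.exp (-u) * u ^ L = Real.Gamma (L+1) := by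
    rw [Real.Gamma_eq_integral (show (0:ℝ) < L + 1 by linarith)]
    simp only [add_sub_cancel_right]
  rw [hGam] at hDCT
  -- second factor
  have hB : Tendsto (fun t : ℝ => N (1/t) / ((1/t) ^ L * F (1/t))) (𝓝[>] (0:ℝ)) (𝓝 1) := by
    apply (hNF.comp tendsto_inv_nhdsGT_zero).congr
    intro t
    simp only [Function.comp_apply, one_div]
  -- assemble
  have hprod := (hDCT.mul hB).mul_const (Real.Gamma (L+1))⁻¹
  rw [mul_one, mul_inv_cancel₀ hGamma_pos.ne'] at hprod
  refine hprod.congr' ?_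
  have hmem : Ioo (0:ℝ) (1/X) ∈ 𝓝[>] (0:ℝ) :=
    Ioo_mem_nhdsGT (by positivity)
  filter_upwards [hmem] with t ht
  have ht0 : (0:ℝ) < t := ht.1
  have h1t : X ≤ 1/t := by
    rw [le_div_iff₀ ht0]
    have h := ht.2
    rw [lt_div_iff₀ hXpos] at h
    linarith
  have hN1t : 0 < N (1/t) := hNposX _ h1t
  have h1t0 : (0:ℝ) < 1/t := by positivity
  have hFt : 0 < F (1/t) := hFpos _ h1t0
  have hrpow : t ^ (-L) = (1/t) ^ L := by
    rw [one_div, Real.rpow_neg ht0.le, ← Real.inv_rpow ht0.le]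
  have hint : ∫ u in Ioi (0:ℝ), Real.exp (-u) * (N (u/t) / N (1/t))
      = (∑' n : ℕ, (M n : ℝ) * Real.exp (-t * lam n)) / N (1/t) := by
    rw [← hINT t ht0, ← integral_div]
    exact integral_congr_ae (ae_of_all _ (fun u => by ring))
  rw [hint, hrpow]
  have e1 := (Real.rpow_pos_of_pos h1t0 L).ne'
  have e2 := hFt.ne'
  have e3 := hN1t.ne'
  have e4 := hGamma_pos.ne'
  field_simp
end
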